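/- arXiv:1703.08850 — 3 statements merged into one kernel-verified Lean document; each statement's English description precedes it below -/
import Mathlib

section
/- Let w ∈ W_n correspond, under the realization of W_n as signed permutations, to the tuple (m_1, ..., m_n) ∈ X_n^n with m_i = w(i). Then for all r_1, ..., r_n ∈ {0, 1, ..., n}: (v_1^{r_1} ⊗ ⋯ ⊗ v_n^{r_n}) · Φ(T_w) = v_{m_1}^{r_{|m_1|}} ⊗ ⋯ ⊗ v_{m_n}^{r_{|m_n|}}, where Φ is the tensorial representation of E_n^B on V^{⊗n}. -/
set_option synthInstance.maxHeartbeats 1000000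
set_option maxHeartbeats 2000000
noncomputable section

open scoped Classical

/-- Generators of the bt-algebra of type B (0-indexed: `T i` is the paper's
`T_{i+1}`, `E i` is `E_{i+1}`, `F j` is `F_{j+1}`). -/
inductive BtGen (n : ℕ) : Type
  | B1 : 0 < n → BtGen n
  | T : Fin (n - 1) → BtGen n
  | E : Fin (n - 1) → BtGen n
  | F : Fin n → BtGen n

namespace Bt

variable (R : Type) [Field R] (u v : R) (n : ℕ)

/-- Shorthand for the canonical image of a generator in the free algebra. -/
def g (x : BtGen n) : FreeAlgebra R (BtGen n) := FreeAlgebra.ι R x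

/-- The defining relations of the bt-algebra of type B. -/
inductive Rel : FreeAlgebra R (BtGen n) → FreeAlgebra R (BtGen n) → Prop
  | tt_far (i j : Fin (n - 1)) (h : (i : ℕ) + 1 < (j : ℕ)) :
      Rel (g R n (.T i) * g R n (.T j)) (g R n (.T j) * g R n (.T i))
  | braid (i j : Fin (n - 1)) (h : (j : ℕ) = (i : ℕ) + 1) :
      Rel (g R n (.T i) * g R n (.T j) * g R n (.T i))
          (g R n (.T j) * g R n (.T i) * g R n (.T j))
  | quadT (i : Fin (n - 1)) :
      Rel (g R n (.T i) * g R n (.T i))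
          (1 + algebraMap R _ (u - u⁻¹) * (g R n (.E i) * g R n (.T i)))
  | idemE (i : Fin (n - 1)) : Rel (g R n (.E i) * g R n (.E i)) (g R n (.E i))
  | commEE (i j : Fin (n - 1)) :
      Rel (g R n (.E i) * g R n (.E j)) (g R n (.E j) * g R n (.E i))
  | commET (i : Fin (n - 1)) :
      Rel (g R n (.E i) * g R n (.T i)) (g R n (.T i) * g R n (.E i))
  | commET_far (i j : Fin (n - 1)) (h : (i : ℕ) + 1 < (j : ℕ) ∨ (j : ℕ) + 1 < (i : ℕ)) :
      Rel (g R n (.E i) * g R n (.T j)) (g R n (.T j) * g R n (.E i))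
  | eet (i j : Fin (n - 1)) (h : (j : ℕ) = (i : ℕ) + 1 ∨ (i : ℕ) = (j : ℕ) + 1) :
      Rel (g R n (.E i) * g R n (.E j) * g R n (.T i))
          (g R n (.T i) * (g R n (.E i) * g R n (.E j)))
  | ete (i j : Fin (n - 1)) (h : (j : ℕ) = (i : ℕ) + 1 ∨ (i : ℕ) = (j : ℕ) + 1) :
      Rel (g R n (.E j) * g R n (.T i) * g R n (.E j))
          (g R n (.T i) * (g R n (.E i) * g R n (.E j)))
  | ett (i j : Fin (n - 1)) (h : (j : ℕ) = (i : ℕ) + 1 ∨ (i : ℕ) = (j : ℕ) + 1) :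
      Rel (g R n (.E i) * g R n (.T j) * g R n (.T i))
          (g R n (.T j) * g R n (.T i) * g R n (.E j))
  | bquad (h : 0 < n) (i : Fin (n - 1)) (hi : (i : ℕ) = 0) :
      Rel (g R n (.B1 h) * g R n (.T i) * g R n (.B1 h) * g R n (.T i))
          (g R n (.T i) * g R n (.B1 h) * g R n (.T i) * g R n (.B1 h))
  | commBT (h : 0 < n) (i : Fin (n - 1)) (hi : 0 < (i : ℕ)) :
      Rel (g R n (.B1 h) * g R n (.T i)) (g R n (.T i) * g R n (.B1 h))
  | quadB (h : 0 < n) (j : Fin n) (hj : (j : ℕ) = 0) :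
      Rel (g R n (.B1 h) * g R n (.B1 h))
          (1 + algebraMap R _ (v - v⁻¹) * (g R n (.F j) * g R n (.B1 h)))
  | commBE (h : 0 < n) (i : Fin (n - 1)) :
      Rel (g R n (.B1 h) * g R n (.E i)) (g R n (.E i) * g R n (.B1 h))
  | idemF (j : Fin n) : Rel (g R n (.F j) * g R n (.F j)) (g R n (.F j))
  | commBF (h : 0 < n) (j : Fin n) :
      Rel (g R n (.B1 h) * g R n (.F j)) (g R n (.F j) * g R n (.B1 h))
  | commFE (j : Fin n) (i : Fin (n - 1)) :
      Rel (g R n (.F j) * g R n (.E i)) (g R n (.E i) * g R n (.F j))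
  | ftEq (i : Fin (n - 1)) (j k : Fin n) (hj : (j : ℕ) = (i : ℕ)) (hk : (k : ℕ) = (i : ℕ) + 1) :
      Rel (g R n (.F j) * g R n (.T i)) (g R n (.T i) * g R n (.F k))
  | ftEq' (i : Fin (n - 1)) (j k : Fin n) (hj : (j : ℕ) = (i : ℕ) + 1) (hk : (k : ℕ) = (i : ℕ)) :
      Rel (g R n (.F j) * g R n (.T i)) (g R n (.T i) * g R n (.F k))
  | ftNe (i : Fin (n - 1)) (j : Fin n) (hj : (j : ℕ) ≠ (i : ℕ) ∧ (j : ℕ) ≠ (i : ℕ) + 1) :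
      Rel (g R n (.F j) * g R n (.T i)) (g R n (.T i) * g R n (.F j))
  | eff (i : Fin (n - 1)) (j k : Fin n) (hj : (j : ℕ) = (i : ℕ)) (hk : (k : ℕ) = (i : ℕ) + 1) :
      Rel (g R n (.E i) * g R n (.F j)) (g R n (.F j) * g R n (.F k))
  | eff' (i : Fin (n - 1)) (j k : Fin n) (hj : (j : ℕ) = (i : ℕ)) (hk : (k : ℕ) = (i : ℕ) + 1) :
      Rel (g R n (.E i) * g R n (.F k)) (g R n (.F j) * g R n (.F k))

/-- The bt-algebra of type B, presented by generators and relations. -/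
abbrev EB := RingQuot (Rel R u v n)

/-- The image of a generator in the bt-algebra of type B. -/
def gen (x : BtGen n) : EB R u v n := RingQuot.mkAlgHom R (Rel R u v n) (g R n x)

/-- `tW i` is the paper's braiding generator `T_{i+1}` (out of range: `1`). -/
def tW (i : ℕ) : EB R u v n := if h : i < n - 1 then gen R u v n (.T ⟨i, h⟩) else 1

/-- `eW i` is the paper's tie generator `E_{i+1}` (out of range: `1`). -/
def eW (i : ℕ) : EB R u v n := if h : i < n - 1 then gen R u v n (.E ⟨i, h⟩) else 1

/-- `fW j` is the paper's framing generator `F_{j+1}` (out of range: `1`). -/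
def fW (j : ℕ) : EB R u v n := if h : j < n then gen R u v n (.F ⟨j, h⟩) else 1

/-- The loop generator `B_1`. -/
def bW : EB R u v n := if h : 0 < n then gen R u v n (.B1 h) else 1

/-- The inverse of the braiding generator: `T_i⁻¹ = T_i - (u - u⁻¹) E_i` (0-indexed). -/
def tInv (i : ℕ) : EB R u v n := tW R u v n i - algebraMap R _ (u - u⁻¹) * eW R u v n i

/-- The element `E_{i,j}` of the paper, for 0-indexed `a = i - 1`, `b = j - 1` with `a < b`:
`E_{i,j} = T_i ⋯ T_{j-2} E_{j-1} T_{j-2}⁻¹ ⋯ T_i⁻¹` (and `E_i` when `j = i+1`). -/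
def Epair (a b : ℕ) : EB R u v n :=
  ((List.range (b - a - 1)).map fun k => tW R u v n (a + k)).prod * eW R u v n (b - 1) *
    (((List.range (b - a - 1)).reverse).map fun k => tInv R u v n (a + k)).prod

/-- All pairs of elements of `Fin m` in lexicographic order. -/
def pairList (m : ℕ) : List (Fin m × Fin m) :=
  (List.finRange m).flatMap fun a => (List.finRange m).map fun b => (a, b)

/-- `B_k = T_{k-1} ⋯ T_1 B_1 T_1⁻¹ ⋯ T_{k-1}⁻¹`, paper-indexed (`1 ≤ k ≤ n`). -/
def bK (k : ℕ) : EB R u v n :=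
  (((List.range (k - 1)).reverse).map fun a => tW R u v n a).prod * bW R u v n *
    ((List.range (k - 1)).map fun a => tInv R u v n a).prod

/-- `B̄_k = T_{k-1} ⋯ T_1 B_1 T_1 ⋯ T_{k-1}`, paper-indexed. -/
def bBar (k : ℕ) : EB R u v n :=
  (((List.range (k - 1)).reverse).map fun a => tW R u v n a).prod * bW R u v n *
    ((List.range (k - 1)).map fun a => tW R u v n a).prod

/-- `𝕋⁺_{k,j} = T_{k-1} ⋯ T_j` (and `1` for `j = k`), paper-indexed. -/
def Tp (k j : ℕ) : EB R u v n :=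
  (((List.range (k - j)).reverse).map fun a => tW R u v n (j - 1 + a)).prod

/-- `𝕋⁻_{k,j} = T_{k-1} ⋯ T_j B_j` (and `B_k` for `j = k`), paper-indexed. -/
def Tm (k j : ℕ) : EB R u v n := Tp R u v n k j * bK R u v n j

/-- `𝕋̄⁻_{k,j} = T_{k-1} ⋯ T_j B̄_j` (and `B̄_k` for `j = k`), paper-indexed. -/
def TmBar (k j : ℕ) : EB R u v n := Tp R u v n k j * bBar R u v n j

/-- The product `T_{w_1} ⋯ T_{w_m}` associated to a word in the letters
`{r_1, s_1, …, s_{n-1}}` (letter `0` is `r_1 ↦ B_1`, letter `k ≥ 1` is `s_k ↦ T_k`). -/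
def wordAlg (l : List (Fin n)) : EB R u v n :=
  (l.map fun i => if (i : ℕ) = 0 then bW R u v n else tW R u v n ((i : ℕ) - 1)).prod

end Bt
/-- The field `K = ℂ(u, v)` of rational functions in two indeterminates over `ℂ`. -/
abbrev Kfield : Type := FractionRing (MvPolynomial (Fin 2) ℂ)

/-- The indeterminate `u` of `K = ℂ(u, v)`. -/
def uK : Kfield := algebraMap (MvPolynomial (Fin 2) ℂ) Kfield (MvPolynomial.X 0)

/-- The indeterminate `v` of `K = ℂ(u, v)`. -/
def vK : Kfield := algebraMap (MvPolynomial (Fin 2) ℂ) Kfield (MvPolynomial.X 1)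
namespace Bt

/-- The index set of the basis `{v_i^r : i ∈ X_n, 0 ≤ r ≤ n}` of `V`:
`X_n = {±1, …, ±n}` is modelled as `Fin n × Bool` (`(i, true) = i + 1`,
`(i, false) = -(i + 1)`). -/
abbrev VIdx (n : ℕ) := (Fin n × Bool) × Fin (n + 1)

/-- `V^{⊗n}`, modelled on its basis: the free `K`-module on the `n`-fold
products `v_{i_1}^{r_1} ⊗ ⋯ ⊗ v_{i_n}^{r_n}` of basis vectors of `V`. -/
abbrev Vten (n : ℕ) := (Fin n → VIdx n) →₀ Kfield

/-- The basis vector `v_{i_1}^{r_1} ⊗ ⋯ ⊗ v_{i_n}^{r_n}` of `V^{⊗n}`. -/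
def bv {n : ℕ} (f : Fin n → VIdx n) : Vten n := Finsupp.single f 1

/-- The integer represented by an element of `X_n`. -/
def toIntX {n : ℕ} (x : Fin n × Bool) : ℤ := if x.2 then (x.1 : ℤ) + 1 else -((x.1 : ℤ) + 1)

/-- Negation on `X_n`. -/
def negX {n : ℕ} (x : Fin n × Bool) : Fin n × Bool := (x.1, !x.2)

/-- The endomorphism `𝐓` of `V ⊗ V` acting in the tensor positions `p`, `q`
of `V^{⊗n}` (for `𝐓_i`, take `p = i`, `q = i + 1`): on a basis vector with
`v_i^r` in position `p` and `v_j^s` in position `q`, it gives `u ·` (swap) if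
`i = j, r = s`; (swap) if `i < j, r = s`; (swap) `+ (u - u⁻¹) ·` (identity) if
`i > j, r = s`; and (swap) if `r ≠ s`. -/
def opT (n : ℕ) (p q : Fin n) : Module.End Kfield (Vten n) :=
  Finsupp.lift (Vten n) Kfield (Fin n → VIdx n) fun f =>
    let a := f p
    let b := f q
    let g := Function.update (Function.update f p b) q a
    if a.2 = b.2 then
      if a.1 = b.1 then uK • bv g
      else if toIntX a.1 < toIntX b.1 then bv g
      else bv g + (uK - uK⁻¹) • bv f
    else bv g

/-- The endomorphism `𝐄` of `V ⊗ V` acting in the tensor positions `p`, `q`. -/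
def opE (n : ℕ) (p q : Fin n) : Module.End Kfield (Vten n) :=
  Finsupp.lift (Vten n) Kfield (Fin n → VIdx n) fun f =>
    if (f p).2 = (f q).2 then bv f else 0

/-- The endomorphism `𝐁` of `V` acting in the tensor position `p` (for `𝐁_1`,
take `p = 0`): `v_i^r ↦ v_{-i}^r` if `r ≠ 0` or (`r = 0` and `i > 0`), and
`v_i^r ↦ v_{-i}^r + (v - v⁻¹) v_i^r` if `r = 0` and `i < 0`. -/
def opB (n : ℕ) (p : Fin n) : Module.End Kfield (Vten n) :=
  Finsupp.lift (Vten n) Kfield (Fin n → VIdx n) fun f =>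
    let a := f p
    let g := Function.update f p (negX a.1, a.2)
    if a.2 = 0 ∧ a.1.2 = false then bv g + (vK - vK⁻¹) • bv f else bv g

/-- The endomorphism `𝐅` of `V` acting in the tensor position `p`:
`v_i^r ↦ v_i^r` if `r = 0`, and `v_i^r ↦ 0` if `r > 0`. -/
def opF (n : ℕ) (p : Fin n) : Module.End Kfield (Vten n) :=
  Finsupp.lift (Vten n) Kfield (Fin n → VIdx n) fun f =>
    if (f p).2 = 0 then bv f else 0

end Bt
namespace Bt

/-- The sign-flip involution of `X_n = {±1, …, ±n}` (modelled as `Fin n × Bool`,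
where `(i, true)` is `i + 1` and `(i, false)` is `-(i + 1)`). -/
def flipPerm (n : ℕ) : Equiv.Perm (Fin n × Bool) :=
  (Equiv.refl (Fin n)).prodCongr ⟨Bool.not, Bool.not, Bool.not_not, Bool.not_not⟩

/-- The Coxeter generators of `W_n` as signed permutations: letter `0` is
`r_1` (the sign change of `±1`), and letter `k ≥ 1` is `s_k` (the transposition
of `k` and `k+1`, together with `-k` and `-(k+1)`). -/
def genPerm (n : ℕ) (i : Fin n) : Equiv.Perm (Fin n × Bool) :=
  if h : (i : ℕ) = 0 then Equiv.swap (⟨0, i.pos⟩, true) (⟨0, i.pos⟩, false)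
  else
    Equiv.swap (⟨(i : ℕ) - 1, by have := i.isLt; omega⟩, true) (⟨(i : ℕ), i.isLt⟩, true) *
      Equiv.swap (⟨(i : ℕ) - 1, by have := i.isLt; omega⟩, false) (⟨(i : ℕ), i.isLt⟩, false)

/-- The signed permutation `w_1 ⋯ w_m` associated to a word in the letters
`{r_1, s_1, …, s_{n-1}}`. -/
def wordPerm (n : ℕ) (l : List (Fin n)) : Equiv.Perm (Fin n × Bool) :=
  (l.map (genPerm n)).prod

/-- The Coxeter group `W_n` of type `B_n`, realized as the group of signed
permutations of `X_n = {±1, …, ±n}` (the permutations of `Fin n × Bool`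
commuting with the sign flip). -/
abbrev Wb (n : ℕ) := Subgroup.centralizer {flipPerm n}

end Bt

namespace BtAux

open Bt Equiv

variable {n : ℕ}

/-! ### Basic facts about `toIntX`, `flipPerm`, `genPerm` -/

lemma flipPerm_apply (x : Fin n × Bool) : flipPerm n x = (x.1, !x.2) := rfl

lemma toIntX_natAbs (x : Fin n × Bool) : (toIntX x).natAbs = (x.1 : ℕ) + 1 := by
  rcases x with ⟨i, b⟩
  cases b <;> simp [toIntX] <;> omega

lemma toIntX_pos_iff (x : Fin n × Bool) : 0 < toIntX x ↔ x.2 = true := by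
  rcases x with ⟨i, b⟩
  cases b <;> simp [toIntX] <;> omega

lemma toIntX_inj : Function.Injective (toIntX (n := n)) := by
  intro x y h
  have h1 : (x.1 : ℕ) + 1 = (y.1 : ℕ) + 1 := by
    rw [← toIntX_natAbs, ← toIntX_natAbs, h]
  have h2 : (0 < toIntX x) ↔ (0 < toIntX y) := by rw [h]
  rw [toIntX_pos_iff, toIntX_pos_iff] at h2
  have h3 : x.2 = y.2 := by
    cases hx : x.2 <;> cases hy : y.2 <;> simp_all
  exact Prod.ext (Fin.ext (by omega)) h3

lemma toIntX_flip (x : Fin n × Bool) : toIntX (flipPerm n x) = -toIntX x := by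
  rcases x with ⟨i, b⟩
  cases b <;> simp [toIntX, flipPerm_apply]

/-- The value function of a signed permutation. -/
def valB (σ : Perm (Fin n × Bool)) (k : Fin n) : ℤ := toIntX (σ (k, true))

lemma valB_natAbs (σ : Perm (Fin n × Bool)) (k : Fin n) :
    (valB σ k).natAbs = ((σ (k, true)).1 : ℕ) + 1 := toIntX_natAbs _

lemma valB_natAbs_le (σ : Perm (Fin n × Bool)) (k : Fin n) : (valB σ k).natAbs ≤ n := by
  rw [valB_natAbs]; exact (σ (k, true)).1.isLt

lemma valB_ne_zero (σ : Perm (Fin n × Bool)) (k : Fin n) : valB σ k ≠ 0 := by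
  intro h
  have h2 := valB_natAbs σ k
  rw [h] at h2
  simp at h2

lemma valB_inj (σ : Perm (Fin n × Bool)) : Function.Injective (valB σ) := by
  intro j k h
  have h2 : ((j, true) : Fin n × Bool) = (k, true) := σ.injective (toIntX_inj h)
  exact congrArg Prod.fst h2

lemma mem_Wb_iff (σ : Perm (Fin n × Bool)) :
    σ ∈ Wb n ↔ ∀ x, σ (flipPerm n x) = flipPerm n (σ x) := by
  rw [Subgroup.mem_centralizer_iff]
  constructor
  · intro h x
    have h1 := h (flipPerm n) (Set.mem_singleton _)
    have h2 := Equiv.ext_iff.mp h1.symm x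
    simpa [Perm.mul_apply] using h2
  · intro h y hy
    rcases hy with rfl
    apply Equiv.ext
    intro x
    simp only [Perm.mul_apply]
    exact (h x).symm

lemma Wb_flip {σ : Perm (Fin n × Bool)} (hσ : σ ∈ Wb n) (x : Fin n × Bool) :
    σ (flipPerm n x) = flipPerm n (σ x) := (mem_Wb_iff σ).mp hσ x

lemma valB_natAbs_inj {σ : Perm (Fin n × Bool)} (hσ : σ ∈ Wb n) :
    Function.Injective fun k => (valB σ k).natAbs := by
  intro j k h
  simp only at h
  rcases Int.natAbs_eq_natAbs_iff.mp h with h' | h'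
  · exact valB_inj σ h'
  · exfalso
    have h2 : toIntX (σ (j, true)) = toIntX (flipPerm n (σ (k, true))) := by
      rw [toIntX_flip]; exact h'
    have h3 : σ (j, true) = flipPerm n (σ (k, true)) := toIntX_inj h2
    rw [← Wb_flip hσ] at h3
    have h4 : ((j, true) : Fin n × Bool) = flipPerm n (k, true) := σ.injective h3
    simp [flipPerm_apply, Prod.ext_iff] at h4

lemma swap_pair_apply (a b k : Fin n) (t : Bool) :
    Equiv.swap (a, t) (b, t) (k, t) = (Equiv.swap a b k, t) := by
  rcases eq_or_ne k a with rfl | h1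
  · simp
  rcases eq_or_ne k b with rfl | h2
  · simp
  rw [Equiv.swap_apply_of_ne_of_ne (by simp [Prod.ext_iff, h1]) (by simp [Prod.ext_iff, h2]),
    Equiv.swap_apply_of_ne_of_ne h1 h2]

lemma swap_pair_apply_ne (a b k : Fin n) (s t : Bool) (hst : s ≠ t) :
    Equiv.swap (a, s) (b, s) (k, t) = (k, t) :=
  Equiv.swap_apply_of_ne_of_ne (by simp [Prod.ext_iff, hst.symm])
    (by simp [Prod.ext_iff, hst.symm])

/-- The position `c - 1`. -/
def prevIdx (c : Fin n) : Fin n := ⟨(c : ℕ) - 1, by have := c.isLt; omega⟩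

lemma genPerm_zero {c : Fin n} (hc : (c : ℕ) = 0) :
    genPerm n c = Equiv.swap ((c, true) : Fin n × Bool) (c, false) := by
  have hc' : (⟨0, c.pos⟩ : Fin n) = c := by simp [Fin.ext_iff, hc]
  rw [genPerm, dif_pos hc, hc']

lemma genPerm_pos {c : Fin n} (hc : (c : ℕ) ≠ 0) :
    genPerm n c =
      Equiv.swap ((prevIdx c, true) : Fin n × Bool) (c, true) *
        Equiv.swap ((prevIdx c, false) : Fin n × Bool) (c, false) := by
  rw [genPerm, dif_neg hc]
  rfl

lemma genPerm_pos_apply {c : Fin n} (hc : (c : ℕ) ≠ 0) (k : Fin n) (b : Bool) :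
    genPerm n c (k, b) = (Equiv.swap (prevIdx c) c k, b) := by
  rw [genPerm_pos hc]
  cases b
  · rw [Perm.mul_apply, swap_pair_apply (prevIdx c) c k false,
      swap_pair_apply_ne (prevIdx c) c _ true false (by simp)]
  · rw [Perm.mul_apply, swap_pair_apply_ne (prevIdx c) c k false true (by simp),
      swap_pair_apply (prevIdx c) c k true]

lemma genPerm_zero_apply {c : Fin n} (hc : (c : ℕ) = 0) (k : Fin n) :
    genPerm n c (k, true) = if k = c then (c, false) else (k, true) := by
  rw [genPerm_zero hc]
  rcases eq_or_ne k c with rfl | h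
  · simp
  · rw [if_neg h, Equiv.swap_apply_of_ne_of_ne (by simp [Prod.ext_iff, h])
      (by simp [Prod.ext_iff])]

lemma genPerm_mem (c : Fin n) : genPerm n c ∈ Wb n := by
  rw [mem_Wb_iff]
  rintro ⟨k, b⟩
  have e : flipPerm n (k, b) = (k, !b) := rfl
  by_cases hc : (c : ℕ) = 0
  · rw [genPerm_zero hc]
    rcases eq_or_ne k c with rfl | h
    · cases b <;> simp [flipPerm_apply]
    · rw [e, Equiv.swap_apply_of_ne_of_ne (by simp [Prod.ext_iff, h]) (by simp [Prod.ext_iff, h]),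
        Equiv.swap_apply_of_ne_of_ne (by simp [Prod.ext_iff, h]) (by simp [Prod.ext_iff, h]), e]
  · rw [e, genPerm_pos_apply hc, genPerm_pos_apply hc]; rfl

lemma genPerm_sq (c : Fin n) : genPerm n c * genPerm n c = 1 := by
  by_cases hc : (c : ℕ) = 0
  · rw [genPerm_zero hc, Equiv.swap_mul_self]
  · apply Equiv.ext
    rintro ⟨k, b⟩
    rw [Perm.mul_apply, genPerm_pos_apply hc, genPerm_pos_apply hc, Equiv.swap_apply_self,
      Perm.one_apply]

lemma valB_mul_genPerm_zero {σ : Perm (Fin n × Bool)} (hσ : σ ∈ Wb n) {c : Fin n}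
    (hc : (c : ℕ) = 0) (k : Fin n) :
    valB (σ * genPerm n c) k = if k = c then -valB σ k else valB σ k := by
  rw [valB, Perm.mul_apply, genPerm_zero_apply hc]
  rcases eq_or_ne k c with rfl | h
  · rw [if_pos rfl, if_pos rfl]
    have e : ((k, false) : Fin n × Bool) = flipPerm n (k, true) := rfl
    rw [e, Wb_flip hσ, toIntX_flip, valB]
  · rw [if_neg h, if_neg h, valB]

lemma valB_mul_genPerm_pos (σ : Perm (Fin n × Bool)) {c : Fin n}
    (hc : (c : ℕ) ≠ 0) (k : Fin n) :
    valB (σ * genPerm n c) k = valB σ (Equiv.swap (prevIdx c) c k) := by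
  rw [valB, Perm.mul_apply, genPerm_pos_apply hc, valB]

end BtAux

namespace BtAux

open Bt Equiv Finset

variable {n : ℕ}

/-! ### The length function -/

/-- Number of inversions among positive positions. -/
def invB (σ : Perm (Fin n × Bool)) : ℕ :=
  (univ.filter fun x : Fin n × Fin n => x.1 < x.2 ∧ valB σ x.2 < valB σ x.1).card

/-- Sum of absolute values of negative entries. -/
def negB (σ : Perm (Fin n × Bool)) : ℕ :=
  ∑ k : Fin n, if valB σ k < 0 then (valB σ k).natAbs else 0

/-- The type-B length statistic. -/
def lenB (σ : Perm (Fin n × Bool)) : ℕ := invB σ + negB σ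

/-- The ascent condition for right multiplication by the generator `c`. -/
def ascB (σ : Perm (Fin n × Bool)) (c : Fin n) : Prop :=
  if (c : ℕ) = 0 then 0 < valB σ c else valB σ (prevIdx c) < valB σ c

lemma card_abs_lt {σ : Perm (Fin n × Bool)} (hσ : σ ∈ Wb n) (A : ℕ) (hA : A ≤ n) :
    (univ.filter fun j : Fin n => (valB σ j).natAbs < A).card = A - 1 := by
  have habs : ∀ j : Fin n, 1 ≤ (valB σ j).natAbs := fun j => by
    have := valB_natAbs σ j; omega
  set e : Fin n → Fin n := fun j =>
    ⟨(valB σ j).natAbs - 1, by have h1 := valB_natAbs_le σ j; have h2 := habs j; omega⟩ with he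
  have einj : Function.Injective e := by
    intro j k h
    apply valB_natAbs_inj hσ
    have hj := habs j
    have hk := habs k
    have h3 := congrArg Fin.val h
    simp only [he] at h3
    show (valB σ j).natAbs = (valB σ k).natAbs
    omega
  have ebij := Finite.injective_iff_bijective.mp einj
  have ecard : (univ.filter fun j : Fin n => (valB σ j).natAbs < A).card
      = (univ.filter fun m : Fin n => (m : ℕ) + 1 < A).card := by
    apply Finset.card_equiv (Equiv.ofBijective e ebij)
    intro j
    simp only [mem_filter, mem_univ, true_and, Equiv.ofBijective_apply, he]
    have := habs j
    constructor <;> intro h <;> omega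
  rw [ecard]
  have : (univ.filter fun m : Fin n => (m : ℕ) + 1 < A).card = (Finset.range (A - 1)).card := by
    apply Finset.card_nbij (fun m : Fin n => (m : ℕ))
    · intro a ha
      simp only [coe_filter, Set.mem_setOf_eq, mem_filter, mem_univ, true_and] at ha
      simp only [coe_range, Set.mem_Iio, mem_range]
      omega
    · intro a _ b _ hab
      exact Fin.ext hab
    · intro m hm
      simp only [coe_range, Set.mem_Iio] at hm
      refine ⟨⟨m, by omega⟩, ?_, rfl⟩
      simp only [coe_filter, Set.mem_setOf_eq, mem_univ, true_and]
      omega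
  rw [this, Finset.card_range]

/-- Ascent step for the sign-change generator. -/
lemma lenB_ascent_zero {σ : Perm (Fin n × Bool)} (hσ : σ ∈ Wb n) {c : Fin n}
    (hc : (c : ℕ) = 0) (ha : 0 < valB σ c) :
    lenB (σ * genPerm n c) = lenB σ + 1 := by
  set σ' := σ * genPerm n c with hσ'
  have hval : ∀ k, valB σ' k = if k = c then -valB σ c else valB σ k := by
    intro k
    rw [hσ', valB_mul_genPerm_zero hσ hc]
    rcases eq_or_ne k c with rfl | h
    · simp
    · simp [h]
  set A := (valB σ c).natAbs with hA
  have hA1 : 1 ≤ A := by have := valB_natAbs σ c; omega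
  have hAn : A ≤ n := valB_natAbs_le σ c
  have hAv : valB σ c = (A : ℤ) := by rw [hA]; omega
  -- negative-sum part
  have hneg : negB σ' = negB σ + A := by
    rw [negB, negB, ← Finset.sum_erase_add _ _ (Finset.mem_univ c),
      ← Finset.sum_erase_add _ _ (Finset.mem_univ c)]
    have h1 : ∀ k ∈ univ.erase c,
        (if valB σ' k < 0 then (valB σ' k).natAbs else 0)
          = (if valB σ k < 0 then (valB σ k).natAbs else 0) := by
      intro k hk
      rw [hval, if_neg (Finset.mem_erase.mp hk).1]
    rw [Finset.sum_congr rfl h1, hval c, if_pos rfl]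
    rw [if_pos (by omega), if_neg (by omega)]
    omega
  -- inversion part
  have hcle : ∀ j : Fin n, c ≤ j := by
    intro j; rw [Fin.le_def, hc]; omega
  have hx2 : ∀ x : Fin n × Fin n, x.1 < x.2 → x.2 ≠ c := by
    intro x hx h2
    have h3 := hcle x.1
    rw [h2] at hx
    exact absurd (lt_of_le_of_lt h3 hx) (lt_irrefl _)
  -- decomposition of inversion sets
  have hsplit : ∀ τ : Perm (Fin n × Bool),
      invB τ = (univ.filter fun j : Fin n => c < j ∧ valB τ j < valB τ c).card
        + (univ.filter fun x : Fin n × Fin n =>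
            (x.1 < x.2 ∧ valB τ x.2 < valB τ x.1) ∧ x.1 ≠ c).card := by
    intro τ
    rw [invB, ← Finset.card_filter_add_card_filter_not
      (p := fun x : Fin n × Fin n => x.1 = c)
      (s := univ.filter fun x : Fin n × Fin n => x.1 < x.2 ∧ valB τ x.2 < valB τ x.1)]
    congr 1
    · rw [Finset.filter_filter]
      apply Finset.card_nbij (fun x : Fin n × Fin n => x.2)
      · intro x hx
        simp only [coe_filter, Set.mem_setOf_eq, mem_filter, mem_univ, true_and] at hx ⊢
        obtain ⟨⟨h1, h2⟩, h3⟩ := hx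
        rw [h3] at h1 h2
        exact ⟨h1, h2⟩
      · intro x hx y hy hxy
        simp only [coe_filter, Set.mem_setOf_eq, mem_univ, true_and] at hx hy
        exact Prod.ext (hx.2.trans hy.2.symm) hxy
      · intro j hj
        simp only [coe_filter, Set.mem_setOf_eq, mem_univ, true_and] at hj ⊢
        exact ⟨(c, j), ⟨⟨hj.1, hj.2⟩, rfl⟩, rfl⟩
    · rw [Finset.filter_filter]
  have hrest : (univ.filter fun x : Fin n × Fin n =>
        (x.1 < x.2 ∧ valB σ' x.2 < valB σ' x.1) ∧ x.1 ≠ c).card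
      = (univ.filter fun x : Fin n × Fin n =>
        (x.1 < x.2 ∧ valB σ x.2 < valB σ x.1) ∧ x.1 ≠ c).card := by
    congr 1
    apply Finset.filter_congr
    intro x _
    constructor
    · rintro ⟨⟨h1, h2⟩, h3⟩
      rw [hval, hval, if_neg h3, if_neg (hx2 x h1)] at h2
      exact ⟨⟨h1, h2⟩, h3⟩
    · rintro ⟨⟨h1, h2⟩, h3⟩
      rw [hval, hval, if_neg h3, if_neg (hx2 x h1)]
      exact ⟨⟨h1, h2⟩, h3⟩
  -- counting the pairs (c, j)
  have hTc : (univ.filter fun j : Fin n => c < j ∧ valB σ' j < valB σ' c).card + (A - 1)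
      = (univ.filter fun j : Fin n => c < j ∧ valB σ j < valB σ c).card := by
    have hsub : (univ.filter fun j : Fin n => c < j ∧ valB σ j < -valB σ c)
        ⊆ (univ.filter fun j : Fin n => c < j ∧ valB σ j < valB σ c) := by
      intro j hj
      simp only [mem_filter, mem_univ, true_and] at hj ⊢
      exact ⟨hj.1, by omega⟩
    have h1 : (univ.filter fun j : Fin n => c < j ∧ valB σ' j < valB σ' c)
        = (univ.filter fun j : Fin n => c < j ∧ valB σ j < -valB σ c) := by
      apply Finset.filter_congr
      intro j _
      constructor
      · rintro ⟨h1, h2⟩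
        rw [hval, hval, if_pos rfl, if_neg (by intro h; rw [h] at h1; exact lt_irrefl _ h1)] at h2
        exact ⟨h1, h2⟩
      · rintro ⟨h1, h2⟩
        rw [hval, hval, if_pos rfl, if_neg (by intro h; rw [h] at h1; exact lt_irrefl _ h1)]
        exact ⟨h1, h2⟩
    have h2 : ((univ.filter fun j : Fin n => c < j ∧ valB σ j < valB σ c)
          \ (univ.filter fun j : Fin n => c < j ∧ valB σ j < -valB σ c))
        = (univ.filter fun j : Fin n => (valB σ j).natAbs < A) := by
      ext j
      simp only [Finset.mem_sdiff, mem_filter, mem_univ, true_and, not_and, not_lt]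
      constructor
      · rintro ⟨⟨h1, h2⟩, h3⟩
        have h4 := h3 h1
        have h5 : valB σ j ≠ -valB σ c := by
          intro h6
          have h7 : (valB σ j).natAbs = (valB σ c).natAbs := by rw [h6]; omega
          have := valB_natAbs_inj hσ h7
          rw [this] at h1
          exact lt_irrefl _ h1
        omega
      · intro h1
        have hjc : j ≠ c := by
          intro h2
          rw [h2] at h1
          omega
        have h3 : c < j := lt_of_le_of_ne (hcle j) (Ne.symm hjc)
        have h4 : valB σ j ≠ -valB σ c := by
          intro h6
          have h7 : (valB σ j).natAbs = (valB σ c).natAbs := by rw [h6]; omega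
          exact hjc (valB_natAbs_inj hσ h7)
        exact ⟨⟨h3, by omega⟩, fun _ => by omega⟩
    have h3 := Finset.card_sdiff_add_card_eq_card hsub
    rw [h2, card_abs_lt hσ A hAn] at h3
    rw [h1]
    omega
  have hi1 := hsplit σ
  have hi2 := hsplit σ'
  rw [lenB, lenB, hi1, hi2, hrest, hneg]
  omega

/-- Ascent step for a transposition generator. -/
lemma lenB_ascent_pos {σ : Perm (Fin n × Bool)} {c : Fin n}
    (hc : (c : ℕ) ≠ 0) (ha : valB σ (prevIdx c) < valB σ c) :
    lenB (σ * genPerm n c) = lenB σ + 1 := by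
  set σ' := σ * genPerm n c with hσ'
  set p := prevIdx c with hp
  have hpc : (p : ℕ) + 1 = (c : ℕ) := by
    rw [hp]
    show (c : ℕ) - 1 + 1 = (c : ℕ)
    omega
  set sw := Equiv.swap p c with hsw
  have hval : ∀ k, valB σ' k = valB σ (sw k) := fun k => valB_mul_genPerm_pos σ hc k
  have hneg : negB σ' = negB σ := by
    rw [negB, negB]
    apply Fintype.sum_equiv sw
    intro k
    rw [hval]
  have hinv : invB σ' = invB σ + 1 := by
    have h1 : invB σ' = (univ.filter fun x : Fin n × Fin n =>
        sw x.1 < sw x.2 ∧ valB σ x.2 < valB σ x.1).card := by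
      rw [invB]
      apply Finset.card_equiv (sw.prodCongr sw)
      intro x
      simp only [mem_filter, mem_univ, true_and, Equiv.prodCongr_apply, Prod.map]
      rw [hval, hval, hsw]
      rw [Equiv.swap_apply_self, Equiv.swap_apply_self]
    have h2 : (univ.filter fun x : Fin n × Fin n =>
          sw x.1 < sw x.2 ∧ valB σ x.2 < valB σ x.1)
        = insert ((c, p) : Fin n × Fin n)
            (univ.filter fun x : Fin n × Fin n => x.1 < x.2 ∧ valB σ x.2 < valB σ x.1) := by
      ext x
      obtain ⟨a, b⟩ := x
      simp only [mem_filter, mem_univ, true_and, Finset.mem_insert, Prod.mk.injEq, hsw,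
        Equiv.swap_apply_def]
      clear_value σ' p sw
      clear hval hneg h1 hσ' hsw hp
      split_ifs <;> subst_vars <;>
        simp only [Fin.lt_def, Fin.ext_iff, Prod.mk.injEq, true_and, and_true, true_or,
          or_true, iff_true, true_iff] at * <;> omega
    have h3 : ((c, p) : Fin n × Fin n) ∉
        (univ.filter fun x : Fin n × Fin n => x.1 < x.2 ∧ valB σ x.2 < valB σ x.1) := by
      simp only [mem_filter, mem_univ, true_and, not_and]
      intro h
      rw [Fin.lt_def] at h
      omega
    rw [h1, h2, Finset.card_insert_of_notMem h3, invB]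
  rw [lenB, lenB, hinv, hneg]
  omega

/-- Combined ascent lemma. -/
lemma lenB_ascent {σ : Perm (Fin n × Bool)} (hσ : σ ∈ Wb n) {c : Fin n}
    (ha : ascB σ c) : lenB (σ * genPerm n c) = lenB σ + 1 := by
  by_cases hc : (c : ℕ) = 0
  · exact lenB_ascent_zero hσ hc (by rwa [ascB, if_pos hc] at ha)
  · exact lenB_ascent_pos hc (by rwa [ascB, if_neg hc] at ha)

/-- Descent lemma, as a consequence of the ascent lemma. -/
lemma lenB_descent {σ : Perm (Fin n × Bool)} (hσ : σ ∈ Wb n) {c : Fin n}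
    (ha : ¬ ascB σ c) : lenB σ = lenB (σ * genPerm n c) + 1 := by
  set σ' := σ * genPerm n c with hσ'
  have hσ'mem : σ' ∈ Wb n := mul_mem hσ (genPerm_mem c)
  have hback : σ' * genPerm n c = σ := by
    rw [hσ', mul_assoc, genPerm_sq, mul_one]
  have hasc : ascB σ' c := by
    rw [ascB]
    by_cases hc : (c : ℕ) = 0
    · rw [if_pos hc]
      rw [ascB, if_pos hc, not_lt] at ha
      have hne := valB_ne_zero σ c
      have := valB_mul_genPerm_zero hσ hc c
      rw [if_pos rfl] at this
      rw [hσ', this]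
      omega
    · rw [if_neg hc]
      rw [ascB, if_neg hc, not_lt] at ha
      have hne : valB σ (prevIdx c) ≠ valB σ c := by
        intro h
        have := valB_inj σ h
        have h2 : (prevIdx c : ℕ) = (c : ℕ) - 1 := rfl
        have h3 := congrArg Fin.val this
        omega
      have h1 := valB_mul_genPerm_pos σ hc (prevIdx c)
      have h2 := valB_mul_genPerm_pos σ hc c
      rw [Equiv.swap_apply_left] at h1
      rw [Equiv.swap_apply_right] at h2
      rw [hσ'] at *
      rw [h1, h2]
      omega
  have := lenB_ascent hσ'mem hasc
  rw [hback] at this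
  omega

end BtAux

namespace BtAux

open Bt Equiv Finset

variable {n : ℕ}

lemma valB_one (k : Fin n) : valB 1 k = (k : ℤ) + 1 := by
  rw [valB, Perm.one_apply, toIntX, if_pos rfl]

lemma lenB_one : lenB (1 : Perm (Fin n × Bool)) = 0 := by
  rw [lenB, invB, negB]
  have h1 : (univ.filter fun x : Fin n × Fin n =>
      x.1 < x.2 ∧ valB (1 : Perm (Fin n × Bool)) x.2 < valB 1 x.1) = ∅ := by
    ext x
    simp only [mem_filter, mem_univ, true_and, Finset.notMem_empty, iff_false, not_and,
      valB_one, Fin.lt_def]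
    intro h
    omega
  rw [h1, Finset.card_empty,
    Finset.sum_eq_zero (fun k _ => by rw [valB_one, if_neg (by omega)])]
  rfl

lemma eq_one_of_all_asc {σ : Perm (Fin n × Bool)} (hσ : σ ∈ Wb n)
    (h : ∀ c : Fin n, ascB σ c) : σ = 1 := by
  have low : ∀ m : ℕ, ∀ hm : m < n, (m : ℤ) + 1 ≤ valB σ ⟨m, hm⟩ := by
    intro m
    induction m with
    | zero =>
      intro hm
      have := h ⟨0, hm⟩
      rw [ascB, if_pos rfl] at this
      omega
    | succ m IH =>
      intro hm
      have hc := h ⟨m + 1, hm⟩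
      rw [ascB, if_neg (by simp)] at hc
      have hprev : prevIdx (⟨m + 1, hm⟩ : Fin n) = ⟨m, by omega⟩ := by
        apply Fin.ext
        show (m + 1) - 1 = m
        omega
      rw [hprev] at hc
      have := IH (by omega)
      push_cast
      omega
  have high : ∀ k : Fin n, valB σ k ≤ (n : ℤ) := by
    intro k
    have h1 := valB_natAbs_le σ k
    omega
  have down : ∀ d : ℕ, ∀ hd : d < n, valB σ ⟨n - 1 - d, by omega⟩ ≤ (n : ℤ) - d := by
    intro d
    induction d with
    | zero =>
      intro hd
      simpa using high ⟨n - 1 - 0, by omega⟩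
    | succ d IH =>
      intro hd
      have hc := h ⟨n - 1 - d, by omega⟩
      have hne : ((⟨n - 1 - d, by omega⟩ : Fin n) : ℕ) ≠ 0 := by
        show n - 1 - d ≠ 0
        omega
      rw [ascB, if_neg hne] at hc
      have hprev : prevIdx (⟨n - 1 - d, by omega⟩ : Fin n) = ⟨n - 1 - (d + 1), by omega⟩ := by
        apply Fin.ext
        show (n - 1 - d) - 1 = n - 1 - (d + 1)
        omega
      rw [hprev] at hc
      have h2 := IH (by omega)
      push_cast at h2 ⊢
      omega
  have hval : ∀ k : Fin n, valB σ k = (k : ℤ) + 1 := by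
    intro k
    have h1 := low (k : ℕ) k.isLt
    have h2 := down (n - 1 - (k : ℕ)) (by have := k.isLt; omega)
    have hk : (⟨n - 1 - (n - 1 - (k : ℕ)), by have := k.isLt; omega⟩ : Fin n) = k := by
      apply Fin.ext
      show n - 1 - (n - 1 - (k : ℕ)) = (k : ℕ)
      have := k.isLt
      omega
    rw [hk] at h2
    have h4 : (⟨(k : ℕ), k.isLt⟩ : Fin n) = k := Fin.ext rfl
    rw [h4] at h1
    have := k.isLt
    omega
  have htrue : ∀ k : Fin n, σ (k, true) = (k, true) := by
    intro k
    apply toIntX_inj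
    have := hval k
    rw [valB] at this
    rw [this, toIntX, if_pos rfl]
  apply Equiv.ext
  rintro ⟨k, b⟩
  cases b
  · have e : ((k, false) : Fin n × Bool) = flipPerm n (k, true) := rfl
    rw [e, Wb_flip hσ, htrue k, Perm.one_apply]
  · rw [htrue k, Perm.one_apply]

lemma wordPerm_nil : wordPerm n ([] : List (Fin n)) = 1 := rfl

lemma wordPerm_cons (c : Fin n) (l : List (Fin n)) :
    wordPerm n (c :: l) = genPerm n c * wordPerm n l := by
  rw [wordPerm, List.map_cons, List.prod_cons, wordPerm]

lemma wordPerm_append (l l' : List (Fin n)) :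
    wordPerm n (l ++ l') = wordPerm n l * wordPerm n l' := by
  rw [wordPerm, List.map_append, List.prod_append, wordPerm, wordPerm]

lemma wordPerm_mem (l : List (Fin n)) : wordPerm n l ∈ Wb n := by
  induction l with
  | nil => rw [wordPerm_nil]; exact one_mem _
  | cons c l IH => rw [wordPerm_cons]; exact mul_mem (genPerm_mem c) IH

lemma exists_word (σ : Perm (Fin n × Bool)) (hσ : σ ∈ Wb n) :
    ∃ l : List (Fin n), wordPerm n l = σ ∧ l.length = lenB σ := by
  suffices H : ∀ m (σ : Perm (Fin n × Bool)), σ ∈ Wb n → lenB σ = m →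
      ∃ l, wordPerm n l = σ ∧ l.length = m by
    obtain ⟨l, h1, h2⟩ := H (lenB σ) σ hσ rfl
    exact ⟨l, h1, h2⟩
  intro m
  induction m using Nat.strong_induction_on with
  | _ m IH =>
    intro σ hσ hm
    by_cases h1 : σ = 1
    · subst h1
      rw [lenB_one] at hm
      exact ⟨[], rfl, by simp [← hm]⟩
    · have h2 : ∃ c, ¬ ascB σ c := by
        by_contra hno
        push_neg at hno
        exact h1 (eq_one_of_all_asc hσ hno)
      obtain ⟨c, hc⟩ := h2
      have hd := lenB_descent hσ hc
      have hmem : σ * genPerm n c ∈ Wb n := mul_mem hσ (genPerm_mem c)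
      have hlt : lenB (σ * genPerm n c) < m := by omega
      obtain ⟨l, hl1, hl2⟩ := IH _ hlt (σ * genPerm n c) hmem rfl
      refine ⟨l ++ [c], ?_, ?_⟩
      · rw [wordPerm_append, hl1]
        have h3 : wordPerm n [c] = genPerm n c := by
          rw [wordPerm_cons, wordPerm_nil, mul_one]
        rw [h3, mul_assoc, genPerm_sq, mul_one]
      · rw [List.length_append, hl2]
        simp
        omega

lemma lenB_le {σ : Perm (Fin n × Bool)} (hσ : σ ∈ Wb n) (l : List (Fin n)) :
    lenB (σ * wordPerm n l) ≤ lenB σ + l.length := by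
  induction l generalizing σ with
  | nil => rw [wordPerm_nil, mul_one]; simp
  | cons c l IH =>
    have h1 : σ * wordPerm n (c :: l) = (σ * genPerm n c) * wordPerm n l := by
      rw [wordPerm_cons, mul_assoc]
    have h2 := IH (mul_mem hσ (genPerm_mem c))
    have h3 : lenB (σ * genPerm n c) ≤ lenB σ + 1 := by
      by_cases ha : ascB σ c
      · rw [lenB_ascent hσ ha]
      · have := lenB_descent hσ ha
        omega
    rw [h1, List.length_cons]
    omega

/-- The every-prefix-ascent condition along a word. -/
def AscList (σ : Perm (Fin n × Bool)) : List (Fin n) → Prop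
  | [] => True
  | c :: l => ascB σ c ∧ AscList (σ * genPerm n c) l

lemma ascList_of_len (l : List (Fin n)) : ∀ σ : Perm (Fin n × Bool), σ ∈ Wb n →
    lenB (σ * wordPerm n l) = lenB σ + l.length → AscList σ l := by
  induction l with
  | nil => intro σ _ _; trivial
  | cons c l IH =>
    intro σ hσ hlen
    have hmem := mul_mem hσ (genPerm_mem c)
    have h1 : σ * wordPerm n (c :: l) = (σ * genPerm n c) * wordPerm n l := by
      rw [wordPerm_cons, mul_assoc]
    rw [h1, List.length_cons] at hlen
    have h2 := lenB_le hmem l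
    by_cases ha : ascB σ c
    · refine ⟨ha, IH _ hmem ?_⟩
      have h3 := lenB_ascent hσ ha
      omega
    · exfalso
      have hd := lenB_descent hσ ha
      omega

end BtAux

namespace BtAux

open Bt Equiv

variable {n : ℕ}

/-- The basis configuration attached to a signed permutation and a framing function. -/
def cfg (σ : Perm (Fin n × Bool)) (r : Fin n → Fin (n + 1)) : Fin n → VIdx n :=
  fun k => (σ (k, true), r ((σ (k, true)).1))

lemma lift_single (F : (Fin n → VIdx n) → Vten n) (f : Fin n → VIdx n) :
    Finsupp.lift (Vten n) Kfield (Fin n → VIdx n) F (bv f) = F f := by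
  rw [bv, Finsupp.lift_apply, Finsupp.sum_single_index (by rw [zero_smul]), one_smul]

lemma opB_apply (p : Fin n) (f : Fin n → VIdx n) :
    opB n p (bv f) =
      if (f p).2 = 0 ∧ (f p).1.2 = false
        then bv (Function.update f p (negX (f p).1, (f p).2)) + (vK - vK⁻¹) • bv f
        else bv (Function.update f p (negX (f p).1, (f p).2)) :=
  lift_single _ f

lemma opT_apply (p q : Fin n) (f : Fin n → VIdx n) :
    opT n p q (bv f) =
      (if (f p).2 = (f q).2 then
        if (f p).1 = (f q).1 then uK • bv (Function.update (Function.update f p (f q)) q (f p))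
        else if toIntX (f p).1 < toIntX (f q).1 then
          bv (Function.update (Function.update f p (f q)) q (f p))
        else bv (Function.update (Function.update f p (f q)) q (f p)) + (uK - uK⁻¹) • bv f
      else bv (Function.update (Function.update f p (f q)) q (f p))) :=
  lift_single _ f

lemma cfg_step_zero {σ : Perm (Fin n × Bool)} (hσ : σ ∈ Wb n) {c : Fin n}
    (hc : (c : ℕ) = 0) (r : Fin n → Fin (n + 1)) :
    Function.update (cfg σ r) c (negX ((cfg σ r c).1), (cfg σ r c).2)
      = cfg (σ * genPerm n c) r := by
  funext k
  rcases eq_or_ne k c with rfl | h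
  · rw [Function.update_self]
    have hg : (σ * genPerm n k) (k, true) = flipPerm n (σ (k, true)) := by
      rw [Perm.mul_apply, genPerm_zero_apply hc, if_pos rfl]
      have e : ((k, false) : Fin n × Bool) = flipPerm n (k, true) := rfl
      rw [e, Wb_flip hσ]
    simp only [cfg]
    rw [hg]
    rfl
  · rw [Function.update_of_ne h]
    simp only [cfg, Perm.mul_apply, genPerm_zero_apply hc, if_neg h]

lemma opB_step {σ : Perm (Fin n × Bool)} (hσ : σ ∈ Wb n) {c : Fin n}
    (hc : (c : ℕ) = 0) (ha : ascB σ c) (r : Fin n → Fin (n + 1)) :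
    opB n c (bv (cfg σ r)) = bv (cfg (σ * genPerm n c) r) := by
  rw [opB_apply, if_neg, cfg_step_zero hσ hc r]
  rintro ⟨-, h2⟩
  rw [ascB, if_pos hc] at ha
  rw [valB, toIntX_pos_iff] at ha
  have : ((cfg σ r c).1).2 = true := ha
  rw [this] at h2
  exact Bool.true_eq_false.mp h2

lemma cfg_step_pos {σ : Perm (Fin n × Bool)} {c : Fin n}
    (hc : (c : ℕ) ≠ 0) (r : Fin n → Fin (n + 1)) :
    Function.update (Function.update (cfg σ r) (prevIdx c) (cfg σ r c)) c (cfg σ r (prevIdx c))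
      = cfg (σ * genPerm n c) r := by
  have hpc : prevIdx c ≠ c := by
    intro h
    have h2 := congrArg Fin.val h
    have h3 : ((c : ℕ) - 1) = (c : ℕ) := h2
    omega
  funext k
  rcases eq_or_ne k c with rfl | h1
  · rw [Function.update_self]
    simp only [cfg, Perm.mul_apply, genPerm_pos_apply hc, Equiv.swap_apply_right]
  · rw [Function.update_of_ne h1]
    rcases eq_or_ne k (prevIdx c) with rfl | h2
    · rw [Function.update_self]
      simp only [cfg, Perm.mul_apply, genPerm_pos_apply hc, Equiv.swap_apply_left]
    · rw [Function.update_of_ne h2]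
      simp only [cfg, Perm.mul_apply, genPerm_pos_apply hc,
        Equiv.swap_apply_of_ne_of_ne h2 h1]

lemma opT_step {σ : Perm (Fin n × Bool)} {c : Fin n}
    (hc : (c : ℕ) ≠ 0) (ha : ascB σ c) (r : Fin n → Fin (n + 1)) :
    opT n (prevIdx c) c (bv (cfg σ r)) = bv (cfg (σ * genPerm n c) r) := by
  rw [ascB, if_neg hc] at ha
  have hne : ((cfg σ r (prevIdx c)).1) ≠ ((cfg σ r c).1) := by
    intro h
    have h2 : valB σ (prevIdx c) = valB σ c := by
      rw [valB, valB]
      exact congrArg toIntX h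
    omega
  have hlt : toIntX ((cfg σ r (prevIdx c)).1) < toIntX ((cfg σ r c).1) := ha
  rw [opT_apply]
  by_cases h2 : ((cfg σ r (prevIdx c)).2) = ((cfg σ r c).2)
  · rw [if_pos h2, if_neg hne, if_pos hlt, cfg_step_pos hc r]
  · rw [if_neg h2, cfg_step_pos hc r]

end BtAux

namespace BtAux

open Bt Equiv

variable {n : ℕ}

lemma main_word (hn : 2 ≤ n)
    (Φ : EB Kfield uK vK n →ₐ[Kfield] (Module.End Kfield (Vten n))ᵐᵒᵖ)
    (hB : ∀ h : 0 < n,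
      Φ (gen Kfield uK vK n (.B1 h)) = MulOpposite.op (opB n ⟨0, h⟩))
    (hT : ∀ i : Fin (n - 1),
      Φ (gen Kfield uK vK n (.T i)) =
        MulOpposite.op
          (opT n ⟨(i : ℕ), Nat.lt_of_lt_of_le i.isLt (Nat.sub_le n 1)⟩
            ⟨(i : ℕ) + 1, Nat.lt_sub_iff_add_lt.mp i.isLt⟩))
    (r : Fin n → Fin (n + 1)) :
    ∀ (l : List (Fin n)) (σ : Perm (Fin n × Bool)), σ ∈ Wb n → AscList σ l →
      (MulOpposite.unop (Φ (wordAlg Kfield uK vK n l))) (bv (cfg σ r))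
        = bv (cfg (σ * wordPerm n l) r) := by
  intro l
  induction l with
  | nil =>
    intro σ _ _
    have h1 : wordAlg Kfield uK vK n [] = 1 := rfl
    rw [h1, map_one, wordPerm_nil, mul_one]
    rfl
  | cons c l IH =>
    intro σ hσ hasc
    obtain ⟨ha, hrest⟩ := hasc
    have hword : wordAlg Kfield uK vK n (c :: l)
        = (if (c : ℕ) = 0 then bW Kfield uK vK n else tW Kfield uK vK n ((c : ℕ) - 1))
          * wordAlg Kfield uK vK n l := by
      simp only [wordAlg, List.map_cons, List.prod_cons]
      rfl
    rw [hword, map_mul, MulOpposite.unop_mul, Module.End.mul_apply]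
    have hgenstep : (MulOpposite.unop (Φ (if (c : ℕ) = 0 then bW Kfield uK vK n
        else tW Kfield uK vK n ((c : ℕ) - 1)))) (bv (cfg σ r))
        = bv (cfg (σ * genPerm n c) r) := by
      by_cases hc : (c : ℕ) = 0
      · rw [if_pos hc]
        have h0 : 0 < n := c.pos
        rw [bW, dif_pos h0, hB h0]
        have hpos : (⟨0, h0⟩ : Fin n) = c := Fin.ext hc.symm
        rw [hpos, MulOpposite.unop_op]
        exact opB_step hσ hc ha r
      · rw [if_neg hc]
        have hlt : (c : ℕ) - 1 < n - 1 := by have := c.isLt; omega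
        rw [tW, dif_pos hlt, hT ⟨(c : ℕ) - 1, hlt⟩, MulOpposite.unop_op]
        have hstep := opT_step hc ha r
        convert hstep using 3 <;> (apply Fin.ext; simp [prevIdx] <;> omega)
    rw [hgenstep, IH _ (mul_mem hσ (genPerm_mem c)) hrest, wordPerm_cons, ← mul_assoc]

end BtAux
open Bt in
/-- Let `w ∈ W_n` (realized as a signed permutation of
`X_n = {±1, …, ±n}`, modelled on `Fin n × Bool`), with `m_i = w(i)`.  Then for
all `r_1, …, r_n ∈ {0, 1, …, n}`:
`(v_1^{r_1} ⊗ ⋯ ⊗ v_n^{r_n}) · Φ(T_w) = v_{m_1}^{r_{|m_1|}} ⊗ ⋯ ⊗ v_{m_n}^{r_{|m_n|}}`,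
where `Φ` is the tensorial representation of `E_n^B` on `V^{⊗n}` (acting on the
right, i.e. landing in `End(V^{⊗n})ᵐᵒᵖ`) and `T_w` is the well-defined element
attached to any reduced word for `w`. -/
theorem btB_tensor_rep_Tw (n : ℕ) (hn : 2 ≤ n)
    (Φ : EB Kfield uK vK n →ₐ[Kfield] (Module.End Kfield (Vten n))ᵐᵒᵖ)
    (hB : ∀ h : 0 < n,
      Φ (gen Kfield uK vK n (.B1 h)) = MulOpposite.op (opB n ⟨0, h⟩))
    (hT : ∀ i : Fin (n - 1),
      Φ (gen Kfield uK vK n (.T i)) =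
        MulOpposite.op
          (opT n ⟨(i : ℕ), by have := i.isLt; omega⟩
            ⟨(i : ℕ) + 1, by have := i.isLt; omega⟩))
    (hE : ∀ i : Fin (n - 1),
      Φ (gen Kfield uK vK n (.E i)) =
        MulOpposite.op
          (opE n ⟨(i : ℕ), by have := i.isLt; omega⟩
            ⟨(i : ℕ) + 1, by have := i.isLt; omega⟩))
    (hF : ∀ j : Fin n, Φ (gen Kfield uK vK n (.F j)) = MulOpposite.op (opF n j))
    (Tw : Wb n → EB Kfield uK vK n)
    (hTw : ∀ (w : Wb n) (l : List (Fin n)),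
      wordPerm n l = (w : Equiv.Perm (Fin n × Bool)) →
      (∀ l' : List (Fin n),
        wordPerm n l' = (w : Equiv.Perm (Fin n × Bool)) → l.length ≤ l'.length) →
      Tw w = wordAlg Kfield uK vK n l) :
    ∀ (w : Wb n) (r : Fin n → Fin (n + 1)),
      (MulOpposite.unop (Φ (Tw w))) (bv fun k => ((k, true), r k)) =
        bv fun k =>
          ((w : Equiv.Perm (Fin n × Bool)) (k, true),
            r (((w : Equiv.Perm (Fin n × Bool)) (k, true)).1)) := by
  classical
  intro w r
  have hw : (w : Equiv.Perm (Fin n × Bool)) ∈ Wb n := w.2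
  obtain ⟨l₀, hl₀, hl₀len⟩ := BtAux.exists_word _ hw
  have hP : ∃ m, ∃ l : List (Fin n),
      l.length = m ∧ wordPerm n l = (w : Equiv.Perm (Fin n × Bool)) :=
    ⟨l₀.length, l₀, rfl, hl₀⟩
  obtain ⟨l, hlen, hperm⟩ := Nat.find_spec hP
  have hmin : ∀ l' : List (Fin n),
      wordPerm n l' = (w : Equiv.Perm (Fin n × Bool)) → l.length ≤ l'.length := by
    intro l' h
    rw [hlen]
    exact Nat.find_min' hP ⟨l', rfl, h⟩
  have hTweq := hTw w l hperm hmin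
  have heq : BtAux.lenB ((1 : Equiv.Perm (Fin n × Bool)) * wordPerm n l)
      = BtAux.lenB (1 : Equiv.Perm (Fin n × Bool)) + l.length := by
    have hub : BtAux.lenB (w : Equiv.Perm (Fin n × Bool)) ≤ l.length := by
      have h2 := BtAux.lenB_le (one_mem (Wb n)) l
      rw [one_mul, hperm, BtAux.lenB_one, zero_add] at h2
      exact h2
    have hlb : l.length ≤ BtAux.lenB (w : Equiv.Perm (Fin n × Bool)) := by
      have h3 := hmin l₀ hl₀
      omega
    rw [one_mul, hperm, BtAux.lenB_one, zero_add]
    omega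
  have hasc := BtAux.ascList_of_len l 1 (one_mem _) heq
  rw [hTweq]
  have hmain := BtAux.main_word hn Φ hB hT r l 1 (one_mem _) hasc
  rw [one_mul, hperm] at hmain
  have hcfg1 : BtAux.cfg (1 : Equiv.Perm (Fin n × Bool)) r = fun k => ((k, true), r k) := by
    funext k
    simp only [BtAux.cfg, Equiv.Perm.one_apply]
  rw [hcfg1] at hmain
  exact hmain
end
end

section
/- In E_n^B (n ≥ 2) the following identities hold: (i) T_k B_k B_{k+1} = B_k T_k B_k for all 1 ≤ k ≤ n-1; (ii) 𝕋^-_{k,j} B_k = B_{k-1} 𝕋^-_{k,j} for all 2 ≤ k ≤ n and 1 ≤ j < k. -/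
noncomputable section

open scoped Classical

section Abstract
variable {M : Type*} [Monoid M]

lemma braid_conj {a a' c c' : M} (ha'a : a' * a = 1) (hcc' : c * c' = 1)
    (hb : a * c * a = c * a * c) : a' * c * a = c * a * c' := by
  have e1 : a' * (c * a * c) * c' = a' * c * a := by
    simp only [mul_assoc]; rw [hcc', mul_one]
  have e2 : a' * (a * c * a) * c' = c * a * c' := by
    simp only [mul_assoc]
    rw [← mul_assoc a' a, ha'a, one_mul]
  rw [← e1, ← hb, e2]

lemma braid_conj' {a a' c c' : M} (haa' : a * a' = 1) (hc'c : c' * c = 1)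
    (hb2 : a' * c * a = c * a * c') : c' * a' * c = a * c' * a' := by
  have e1 : c' * (a' * c * a) * a' = c' * a' * c := by
    simp only [mul_assoc]; rw [haa', mul_one]
  have e2 : c' * (c * a * c') * a' = a * c' * a' := by
    simp only [mul_assoc]
    rw [← mul_assoc c' c, hc'c, one_mul]
  rw [← e1, hb2, e2]

lemma star_step {a a' c c' x : M}
    (haa' : a * a' = 1) (ha'a : a' * a = 1)
    (hcc' : c * c' = 1) (hc'c : c' * c = 1)
    (hb : a * c * a = c * a * c)
    (hcx : c * x = x * c) (hc'x : c' * x = x * c')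
    (hIH : a * x * a * x = x * a * x * a) :
    c * (a * x * a') * c * (a * x * a') = a * x * a' * c * (a * x * a') * c := by
  have hb2 := braid_conj ha'a hcc' hb
  have hb3 : c' * (a' * c) = a * (c' * a') := by
    simpa [mul_assoc] using braid_conj' haa' hc'c hb2
  have hb2y : ∀ y : M, a' * (c * (a * y)) = c * (a * (c' * y)) := fun y => by
    simpa [mul_assoc] using congrArg (· * y) hb2
  have hby : ∀ y : M, a * (c * (a * y)) = c * (a * (c * y)) := fun y => by
    simpa [mul_assoc] using congrArg (· * y) hb
  have hcxy : ∀ y : M, c * (x * y) = x * (c * y) := fun y => by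
    simpa [mul_assoc] using congrArg (· * y) hcx
  have hc'xy : ∀ y : M, c' * (x * y) = x * (c' * y) := fun y => by
    simpa [mul_assoc] using congrArg (· * y) hc'x
  have hIHy : ∀ y : M, a * (x * (a * (x * y))) = x * (a * (x * (a * y))) := fun y => by
    simpa [mul_assoc] using congrArg (· * y) hIH
  simp only [mul_assoc]
  conv_lhs => rw [hb2y, hc'xy, ← hcxy]
  conv_rhs => rw [hb2y, hc'xy, hb3, ← hcxy, ← hIHy, hby]

lemma tm_step {a a' c c' r w x : M}
    (ha'a : a' * a = 1) (hcc' : c * c' = 1)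
    (hb : a * c * a = c * a * c)
    (hcr : c * r = r * c) (hc'r : c' * r = r * c')
    (hcw : c * w = w * c)
    (hx : x = a * w * a')
    (hIH : a * r * x = w * (a * r)) :
    c * (a * r) * (c * x * c') = x * (c * (a * r)) := by
  have hb2 := braid_conj ha'a hcc' hb
  have hb2y : ∀ y : M, a' * (c * (a * y)) = c * (a * (c' * y)) := fun y => by
    simpa [mul_assoc] using congrArg (· * y) hb2
  have hby : ∀ y : M, a * (c * (a * y)) = c * (a * (c * y)) := fun y => by
    simpa [mul_assoc] using congrArg (· * y) hb
  have hcry : ∀ y : M, c * (r * y) = r * (c * y) := fun y => by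
    simpa [mul_assoc] using congrArg (· * y) hcr
  have hcwy : ∀ y : M, c * (w * y) = w * (c * y) := fun y => by
    simpa [mul_assoc] using congrArg (· * y) hcw
  have hIHy : ∀ y : M, a * (r * (a * (w * (a' * y)))) = w * (a * (r * y)) := fun y => by
    have := congrArg (· * y) hIH
    simp only [hx] at this
    simpa [mul_assoc] using this
  subst hx
  simp only [mul_assoc]
  conv_lhs => rw [← hcry, ← hby, hIHy, hcwy, ← hc'r, ← hb2y]

end Abstract


namespace Bt
variable (R : Type) [Field R] (u v : R) (n : ℕ)

lemma relEq {x y : FreeAlgebra R (BtGen n)} (h : Rel R u v n x y) :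
    RingQuot.mkAlgHom R (Rel R u v n) x = RingQuot.mkAlgHom R (Rel R u v n) y :=
  RingQuot.mkAlgHom_rel R h

lemma commute_tW_tW {i j : ℕ} (h : j + 1 < i) :
    Commute (tW R u v n i) (tW R u v n j) := by
  unfold tW
  split_ifs with hi hj hj
  · have h' := relEq R u v n (Rel.tt_far ⟨j, hj⟩ ⟨i, hi⟩ h)
    simp only [map_mul] at h'
    exact (h').symm
  · exact Commute.one_right _
  · exact Commute.one_left _
  · exact Commute.one_left _

lemma commute_tW_eW {i j : ℕ} (h : j + 1 < i ∨ i + 1 < j) :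
    Commute (tW R u v n i) (eW R u v n j) := by
  unfold tW eW
  split_ifs with hi hj hj
  · have h' := relEq R u v n (Rel.commET_far ⟨j, hj⟩ ⟨i, hi⟩ h)
    simp only [map_mul] at h'
    exact (h').symm
  · exact Commute.one_right _
  · exact Commute.one_left _
  · exact Commute.one_left _

lemma commute_eW_eW (i j : ℕ) : Commute (eW R u v n i) (eW R u v n j) := by
  unfold eW
  split_ifs with hi hj hj
  · have h' := relEq R u v n (Rel.commEE ⟨i, hi⟩ ⟨j, hj⟩)
    simp only [map_mul] at h'
    exact h'
  · exact Commute.one_right _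
  · exact Commute.one_left _
  · exact Commute.one_left _

lemma commute_tW_bW {i : ℕ} (h : 1 ≤ i) :
    Commute (tW R u v n i) (bW R u v n) := by
  unfold tW bW
  split_ifs with hi hn hn
  · have h' := relEq R u v n (Rel.commBT hn ⟨i, hi⟩ h)
    simp only [map_mul] at h'
    exact (h').symm
  · exact Commute.one_right _
  · exact Commute.one_left _
  · exact Commute.one_left _

lemma commute_eW_bW (i : ℕ) : Commute (eW R u v n i) (bW R u v n) := by
  unfold eW bW
  split_ifs with hi hn hn
  · have h' := relEq R u v n (Rel.commBE hn ⟨i, hi⟩)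
    simp only [map_mul] at h'
    exact (h').symm
  · exact Commute.one_right _
  · exact Commute.one_left _
  · exact Commute.one_left _

lemma commute_algebraMap_right (s : R) (x : EB R u v n) :
    Commute x (algebraMap R (EB R u v n) s) :=
  (Algebra.commutes s x).symm

lemma commute_algebraMap_left (s : R) (x : EB R u v n) :
    Commute (algebraMap R (EB R u v n) s) x :=
  Algebra.commutes s x

lemma commute_tW_tInv {i j : ℕ} (h : j + 1 < i) :
    Commute (tW R u v n i) (tInv R u v n j) :=
  (commute_tW_tW R u v n h).sub_right
    ((commute_algebraMap_right R u v n (u - u⁻¹) (tW R u v n i)).mul_right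
      (commute_tW_eW R u v n (Or.inl h)))

lemma commute_eW_tInv {i j : ℕ} (h : j + 1 < i) :
    Commute (eW R u v n i) (tInv R u v n j) :=
  ((commute_tW_eW R u v n (Or.inr h)).symm).sub_right
    ((commute_algebraMap_right R u v n (u - u⁻¹) (eW R u v n i)).mul_right
      (commute_eW_eW R u v n i j))

lemma commEt (i : ℕ) : eW R u v n i * tW R u v n i = tW R u v n i * eW R u v n i := by
  unfold tW eW
  split_ifs with hi
  · have h' := relEq R u v n (Rel.commET ⟨i, hi⟩)
    simp only [map_mul] at h'
    exact h'
  · simp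

lemma tW_sq {i : ℕ} (h : i < n - 1) :
    tW R u v n i * tW R u v n i =
      1 + algebraMap R (EB R u v n) (u - u⁻¹) * (eW R u v n i * tW R u v n i) := by
  unfold tW eW
  simp only [dif_pos h]
  have h' := relEq R u v n (Rel.quadT ⟨i, h⟩)
  simpa [gen, map_mul, map_one, map_add, map_sub] using h'

lemma tW_mul_tInv {i : ℕ} (h : i < n - 1) :
    tW R u v n i * tInv R u v n i = 1 := by
  have hq := tW_sq R u v n h
  have hc := commEt R u v n i
  have hcent : tW R u v n i * (algebraMap R (EB R u v n) (u - u⁻¹) * eW R u v n i)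
      = algebraMap R (EB R u v n) (u - u⁻¹) * (tW R u v n i * eW R u v n i) := by
    rw [← mul_assoc, ← Algebra.commutes (u - u⁻¹) (tW R u v n i), mul_assoc]
  unfold tInv
  rw [mul_sub, hq, hc, hcent, add_sub_cancel_right]

lemma tInv_mul_tW {i : ℕ} (h : i < n - 1) :
    tInv R u v n i * tW R u v n i = 1 := by
  have hq := tW_sq R u v n h
  unfold tInv
  rw [sub_mul, hq, mul_assoc, add_sub_cancel_right]

lemma tW_braid {i : ℕ} (h : i + 1 < n - 1) :
    tW R u v n i * tW R u v n (i + 1) * tW R u v n i =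
      tW R u v n (i + 1) * tW R u v n i * tW R u v n (i + 1) := by
  have hi : i < n - 1 := by omega
  unfold tW
  simp only [dif_pos h, dif_pos hi]
  have h' := relEq R u v n (Rel.braid ⟨i, hi⟩ ⟨i + 1, h⟩ rfl)
  simp only [map_mul] at h'
  exact h'

lemma bquad' (h : 2 ≤ n) :
    bW R u v n * tW R u v n 0 * bW R u v n * tW R u v n 0 =
      tW R u v n 0 * bW R u v n * tW R u v n 0 * bW R u v n := by
  have h0 : (0 : ℕ) < n - 1 := by omega
  have hn : 0 < n := by omega
  unfold tW bW
  simp only [dif_pos h0, dif_pos hn]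
  have h' := relEq R u v n (Rel.bquad hn ⟨0, h0⟩ rfl)
  simp only [map_mul] at h'
  exact h'

lemma commute_tW_bK {m k : ℕ} (hm : 1 ≤ m) (hk : k ≤ m) :
    Commute (tW R u v n m) (bK R u v n k) := by
  unfold bK
  refine ((Commute.list_prod_right _ _ ?_).mul_right (commute_tW_bW R u v n hm)).mul_right
    (Commute.list_prod_right _ _ ?_)
  · intro x hx
    obtain ⟨a, ha, rfl⟩ := List.mem_map.1 hx
    have : a < k - 1 := by simpa using List.mem_reverse.1 ha
    exact commute_tW_tW R u v n (by omega)
  · intro x hx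
    obtain ⟨a, ha, rfl⟩ := List.mem_map.1 hx
    have : a < k - 1 := by simpa using ha
    exact commute_tW_tInv R u v n (by omega)

lemma commute_eW_bK {m k : ℕ} (hk : k ≤ m) :
    Commute (eW R u v n m) (bK R u v n k) := by
  unfold bK
  refine ((Commute.list_prod_right _ _ ?_).mul_right (commute_eW_bW R u v n m)).mul_right
    (Commute.list_prod_right _ _ ?_)
  · intro x hx
    obtain ⟨a, ha, rfl⟩ := List.mem_map.1 hx
    have : a < k - 1 := by simpa using List.mem_reverse.1 ha
    exact (commute_tW_eW R u v n (Or.inr (by omega))).symm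
  · intro x hx
    obtain ⟨a, ha, rfl⟩ := List.mem_map.1 hx
    have : a < k - 1 := by simpa using ha
    exact commute_eW_tInv R u v n (by omega)

lemma commute_tInv_bK {m k : ℕ} (hm : 1 ≤ m) (hk : k ≤ m) :
    Commute (tInv R u v n m) (bK R u v n k) :=
  (commute_tW_bK R u v n hm hk).sub_left
    ((commute_algebraMap_left R u v n (u - u⁻¹) (bK R u v n k)).mul_left
      (commute_eW_bK R u v n hk))

lemma commute_tW_Tm {m k j : ℕ} (hj : 1 ≤ j) (hjk : j ≤ k) (hk : k ≤ m) :
    Commute (tW R u v n m) (Tm R u v n k j) := by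
  unfold Tm Tp
  refine (Commute.list_prod_right _ _ ?_).mul_right
    (commute_tW_bK R u v n (by omega) (by omega))
  intro x hx
  obtain ⟨a, ha, rfl⟩ := List.mem_map.1 hx
  have : a < k - j := by simpa using List.mem_reverse.1 ha
  exact commute_tW_tW R u v n (by omega)

lemma commute_tInv_Tm {m k j : ℕ} (hj : 1 ≤ j) (hjk : j ≤ k) (hk : k ≤ m) :
    Commute (tInv R u v n m) (Tm R u v n k j) := by
  refine (commute_tW_Tm R u v n hj hjk hk).sub_left
    ((commute_algebraMap_left R u v n (u - u⁻¹) (Tm R u v n k j)).mul_left ?_)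
  unfold Tm Tp
  refine (Commute.list_prod_right _ _ ?_).mul_right (commute_eW_bK R u v n (by omega))
  intro x hx
  obtain ⟨a, ha, rfl⟩ := List.mem_map.1 hx
  have : a < k - j := by simpa using List.mem_reverse.1 ha
  exact (commute_tW_eW R u v n (Or.inr (by omega))).symm

lemma bK_one : bK R u v n 1 = bW R u v n := by
  simp [bK]

lemma bK_succ (k : ℕ) :
    bK R u v n (k + 2) = tW R u v n k * bK R u v n (k + 1) * tInv R u v n k := by
  unfold bK
  simp [List.range_succ, mul_assoc]

lemma Tm_self (k : ℕ) : Tm R u v n k k = bK R u v n k := by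
  simp [Tm, Tp]

lemma Tm_succ {k j : ℕ} (hj : 1 ≤ j) (hjk : j ≤ k) :
    Tm R u v n (k + 1) j = tW R u v n (k - 1) * Tm R u v n k j := by
  unfold Tm Tp
  have h1 : k + 1 - j = (k - j) + 1 := by omega
  have h2 : j - 1 + (k - j) = k - 1 := by omega
  rw [h1, List.range_succ, List.reverse_append, List.map_append, List.prod_append]
  simp [h2, mul_assoc]

end Bt


namespace Bt
variable (R : Type) [Field R] (u v : R) (n : ℕ)

lemma star : ∀ k : ℕ, 1 ≤ k → k ≤ n - 1 →
    tW R u v n (k - 1) * bK R u v n k * tW R u v n (k - 1) * bK R u v n k =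
      bK R u v n k * tW R u v n (k - 1) * bK R u v n k * tW R u v n (k - 1) := by
  intro k
  induction k with
  | zero => omega
  | succ m ih =>
    intro _ hle
    rcases Nat.eq_zero_or_pos m with hm | hm
    · subst hm
      simpa [bK_one] using (bquad' R u v n (by omega)).symm
    · -- m ≥ 1, k = m + 1
      have hIH := ih hm (by omega)
      have hbk : bK R u v n (m + 1) =
          tW R u v n (m - 1) * bK R u v n m * tInv R u v n (m - 1) := by
        conv_lhs => rw [show m + 1 = (m - 1) + 2 by omega]
        rw [bK_succ, show m - 1 + 1 = m by omega]
      have hb : tW R u v n (m - 1) * tW R u v n m * tW R u v n (m - 1) =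
          tW R u v n m * tW R u v n (m - 1) * tW R u v n m := by
        have h' := tW_braid R u v n (i := m - 1) (by omega)
        rwa [show m - 1 + 1 = m by omega] at h'
      simp only [Nat.add_sub_cancel]
      rw [hbk]
      exact star_step
        (tW_mul_tInv R u v n (by omega)) (tInv_mul_tW R u v n (by omega))
        (tW_mul_tInv R u v n (by omega)) (tInv_mul_tW R u v n (by omega))
        hb
        (commute_tW_bK R u v n hm le_rfl)
        (commute_tInv_bK R u v n hm le_rfl)
        hIH

lemma partI (k : ℕ) (h1 : 1 ≤ k) (h2 : k ≤ n - 1) :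
    tW R u v n (k - 1) * bK R u v n k * bK R u v n (k + 1) =
      bK R u v n k * tW R u v n (k - 1) * bK R u v n k := by
  have hbk : bK R u v n (k + 1) =
      tW R u v n (k - 1) * bK R u v n k * tInv R u v n (k - 1) := by
    conv_lhs => rw [show k + 1 = (k - 1) + 2 by omega]
    rw [bK_succ, show k - 1 + 1 = k by omega]
  rw [hbk]
  have hstar := star R u v n k h1 h2
  calc tW R u v n (k - 1) * bK R u v n k *
        (tW R u v n (k - 1) * bK R u v n k * tInv R u v n (k - 1))
      = tW R u v n (k - 1) * bK R u v n k * tW R u v n (k - 1) * bK R u v n k *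
          tInv R u v n (k - 1) := by
        simp only [mul_assoc]
    _ = bK R u v n k * tW R u v n (k - 1) * bK R u v n k * tW R u v n (k - 1) *
          tInv R u v n (k - 1) := by rw [hstar]
    _ = bK R u v n k * tW R u v n (k - 1) * bK R u v n k *
          (tW R u v n (k - 1) * tInv R u v n (k - 1)) := by
        simp only [mul_assoc]
    _ = bK R u v n k * tW R u v n (k - 1) * bK R u v n k := by
        rw [tW_mul_tInv R u v n (by omega), mul_one]

lemma partII : ∀ k j : ℕ, 2 ≤ k → k ≤ n → 1 ≤ j → j < k →
    Tm R u v n k j * bK R u v n k = bK R u v n (k - 1) * Tm R u v n k j := by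
  intro k
  induction k using Nat.strong_induction_on with
  | _ k ih =>
    intro j hk2 hkn hj1 hjk
    rcases eq_or_lt_of_le (Nat.le_sub_one_of_lt hjk) with hcase | hcase
    · -- j = k - 1
      have hTm : Tm R u v n k j = tW R u v n (k - 2) * bK R u v n (k - 1) := by
        conv_lhs => rw [show k = (k - 1) + 1 by omega]
        rw [Tm_succ R u v n hj1 (by omega), show k - 1 - 1 = k - 2 by omega,
          hcase, Tm_self]
      have hI := partI R u v n (k - 1) (by omega) (by omega)
      rw [show k - 1 + 1 = k by omega, show k - 1 - 1 = k - 2 by omega] at hI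
      rw [hTm, hI]
      simp only [mul_assoc]
    · -- j < k - 1, hence k ≥ 3
      have hk3 : 3 ≤ k := by omega
      have hTm1 : Tm R u v n k j = tW R u v n (k - 2) * Tm R u v n (k - 1) j := by
        conv_lhs => rw [show k = (k - 1) + 1 by omega]
        rw [Tm_succ R u v n hj1 (by omega), show k - 1 - 1 = k - 2 by omega]
      have hTm2 : Tm R u v n (k - 1) j = tW R u v n (k - 3) * Tm R u v n (k - 2) j := by
        conv_lhs => rw [show k - 1 = (k - 2) + 1 by omega]
        rw [Tm_succ R u v n hj1 (by omega), show k - 2 - 1 = k - 3 by omega]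
      have hbk : bK R u v n k =
          tW R u v n (k - 2) * bK R u v n (k - 1) * tInv R u v n (k - 2) := by
        conv_lhs => rw [show k = (k - 2) + 2 by omega]
        rw [bK_succ, show k - 2 + 1 = k - 1 by omega]
      have hx : bK R u v n (k - 1) =
          tW R u v n (k - 3) * bK R u v n (k - 2) * tInv R u v n (k - 3) := by
        conv_lhs => rw [show k - 1 = (k - 3) + 2 by omega]
        rw [bK_succ, show k - 3 + 1 = k - 2 by omega]
      have hIH := ih (k - 1) (by omega) j (by omega) (by omega) hj1 (by omega)
      rw [hTm2, show k - 1 - 1 = k - 2 by omega] at hIH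
      have hIH' : tW R u v n (k - 3) * Tm R u v n (k - 2) j * bK R u v n (k - 1) =
          bK R u v n (k - 2) * (tW R u v n (k - 3) * Tm R u v n (k - 2) j) := by
        rw [hIH]
      have hb : tW R u v n (k - 3) * tW R u v n (k - 2) * tW R u v n (k - 3) =
          tW R u v n (k - 2) * tW R u v n (k - 3) * tW R u v n (k - 2) := by
        have h' := tW_braid R u v n (i := k - 3) (by omega)
        rwa [show k - 3 + 1 = k - 2 by omega] at h'
      have key := tm_step
        (tInv_mul_tW R u v n (i := k - 3) (by omega))
        (tW_mul_tInv R u v n (i := k - 2) (by omega))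
        hb
        (commute_tW_Tm R u v n (m := k - 2) (k := k - 2) (j := j) hj1 (by omega) le_rfl)
        (commute_tInv_Tm R u v n (m := k - 2) (k := k - 2) (j := j) hj1 (by omega) le_rfl)
        (commute_tW_bK R u v n (m := k - 2) (k := k - 2) (by omega) le_rfl)
        hx
        hIH'
      rw [hTm1, hTm2, hbk]
      exact key

end Bt

open Bt in
/-- In `E_n^B` (`n ≥ 2`):
(i) `T_k B_k B_{k+1} = B_k T_k B_k` for all `1 ≤ k ≤ n-1`;
(ii) `𝕋⁻_{k,j} B_k = B_{k-1} 𝕋⁻_{k,j}` for all `2 ≤ k ≤ n` and `1 ≤ j < k`.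
(Indices are the paper's 1-indexed ones; `T_k` is `tW (k-1)`.) -/
theorem btB_restantes (n : ℕ) (hn : 2 ≤ n) :
    (∀ k : ℕ, 1 ≤ k → k ≤ n - 1 →
      tW Kfield uK vK n (k - 1) * bK Kfield uK vK n k * bK Kfield uK vK n (k + 1) =
        bK Kfield uK vK n k * tW Kfield uK vK n (k - 1) * bK Kfield uK vK n k) ∧
    (∀ k j : ℕ, 2 ≤ k → k ≤ n → 1 ≤ j → j < k →
      Tm Kfield uK vK n k j * bK Kfield uK vK n k =
        bK Kfield uK vK n (k - 1) * Tm Kfield uK vK n k j) := by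
  exact ⟨fun k h1 h2 => partI Kfield uK vK n k h1 h2,
    fun k j hk2 hkn hj1 hjk => partII Kfield uK vK n k j hk2 hkn hj1 hjk⟩
end
end

section
/- Let 1 ≤ k < n, let J be a set partition of {0, 1, ..., n-1} and let I be a set partition of {0, 1, ..., n}. Let σ_{j,k} := s_{j-1} ⋯ s_k ∈ S_n (where s_i is the transposition (i, i+1)), and let S_n act on set partitions of {0, 1, ..., n} by permuting {1, ..., n} elementwise and fixing 0 (partitions of {0, ..., n-1} are regarded as partitions of {0, ..., n} by adding n as a singleton block, and conversely). Then: ((σ_{n,k}^{-1}(J) * I) * {n, k}) ∖ {n} = σ_{n-1,k}^{-1}(J) * ((I * {n, k}) ∖ {n}), as set partitions of {0, 1, ..., n-1}. -/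
set_option synthInstance.maxHeartbeats 1000000
set_option maxHeartbeats 2000000
noncomputable section

namespace Bt

/-- Deleting an element from a set partition: `delS I k` is the partition in
which `k` has been removed from its block (and made into a singleton). -/
def delS {X : Type} (I : Setoid X) (k : X) : Setoid X :=
  ⟨fun a b => a = b ∨ (a ≠ k ∧ b ≠ k ∧ I a b), by
    constructor
    · exact fun a => Or.inl rfl
    · rintro a b (rfl | ⟨ha, hb, h⟩)
      · exact Or.inl rfl
      · exact Or.inr ⟨hb, ha, I.iseqv.symm h⟩
    · rintro a b c (rfl | ⟨ha, hb, h⟩) h2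
      · exact h2
      · rcases h2 with rfl | ⟨hb', hc, h'⟩
        · exact Or.inr ⟨ha, hb, h⟩
        · exact Or.inr ⟨ha, hc, I.iseqv.trans h h'⟩⟩

/-- The set partition generated by merging the (blocks of) `a` and `b`. -/
def pairS {X : Type} (a b : X) : Setoid X := Relation.EqvGen.setoid fun x y => x = a ∧ y = b

/-- `τ_{a,b}(I) = (I * {a, b}) ∖ {a}` (with the deleted element kept as a
singleton block). -/
def tauS {X : Type} (I : Setoid X) (a b : X) : Setoid X := delS (I ⊔ pairS a b) a

/-- A permutation `σ ∈ S_n` of `{1, …, n}` extended to `{0, 1, …, n}` fixing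
`0`; element `i + 1` of `Fin (n+1)` corresponds to `i ∈ {1, …, n}`. -/
def liftPerm {n : ℕ} (σ : Equiv.Perm (Fin n)) : Equiv.Perm (Fin (n + 1)) :=
  (finSuccEquiv n).trans ((Equiv.optionCongr σ).trans (finSuccEquiv n).symm)

/-- The action of `σ ∈ S_n` on set partitions of `{0, 1, …, n}` (pushforward of
blocks; `0` is fixed). -/
def actS {n : ℕ} (σ : Equiv.Perm (Fin n)) (I : Setoid (Fin (n + 1))) :
    Setoid (Fin (n + 1)) :=
  Setoid.comap (liftPerm σ).symm I

end Bt
namespace Bt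

/-- The transposition `s_i = (i, i+1)` of `{1, …, n}`, as a permutation of
`{0, 1, …, n}` fixing `0` (and the identity if out of range). -/
def sPerm (n i : ℕ) : Equiv.Perm (Fin (n + 1)) :=
  if h : 1 ≤ i ∧ i + 1 ≤ n then
    Equiv.swap (⟨i, by omega⟩ : Fin (n + 1)) (⟨i + 1, by omega⟩ : Fin (n + 1))
  else 1

/-- `σ_{j,k} = s_{j-1} ⋯ s_k` (for `k < j`), as a permutation of `{0, 1, …, n}`. -/
def sigmaJK (n j k : ℕ) : Equiv.Perm (Fin (n + 1)) :=
  ((List.range (j - k)).map fun a => sPerm n (j - 1 - a)).prod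

/-- The action of `σ⁻¹` on set partitions of `{0, 1, …, n}`:
`x ∼ y` in `σ⁻¹(I)` iff `σ(x) ∼ σ(y)` in `I`. -/
def actInv {n : ℕ} (σ : Equiv.Perm (Fin (n + 1))) (I : Setoid (Fin (n + 1))) :
    Setoid (Fin (n + 1)) :=
  Setoid.comap σ I

end Bt

namespace Bt
open Relation

-- helpers
lemma supl {X : Type} {A B : Setoid X} {x y : X} (h : A x y) : (A ⊔ B) x y :=
  Setoid.le_def.mp le_sup_left h

lemma supr {X : Type} {A B : Setoid X} {x y : X} (h : B x y) : (A ⊔ B) x y :=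
  Setoid.le_def.mp le_sup_right h

lemma singleton_sup {X : Type} {A B : Setoid X} {n : X}
    (hA : ∀ y, A n y → y = n) (hB : ∀ y, B n y → y = n) :
    ∀ y, (A ⊔ B) n y → y = n := by
  have key : ∀ x y, (A ⊔ B) x y → (x = n ↔ y = n) := by
    intro x y h
    rw [Setoid.sup_eq_eqvGen] at h
    have h' : EqvGen (fun x y => A x y ∨ B x y) x y := h
    clear h
    induction h' with
    | rel a b hab =>
        rcases hab with hab | hab
        · exact ⟨fun ha => hA b (ha ▸ hab), fun hb => hA a (A.symm (hb ▸ hab))⟩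
        · exact ⟨fun ha => hB b (ha ▸ hab), fun hb => hB a (B.symm (hb ▸ hab))⟩
    | refl a => exact Iff.rfl
    | symm a b _ ih => exact ih.symm
    | trans a b c _ _ ih1 ih2 => exact ih1.trans ih2
  exact fun y h => (key n y h).mp rfl

lemma delS_sup_of_singleton {X : Type} (A B : Setoid X) (n : X)
    (hA : ∀ y, A n y → y = n) :
    delS (A ⊔ B) n = A ⊔ delS B n := by
  set C := A ⊔ delS B n with hCdef
  have hdB : ∀ y : X, (delS B n) n y → y = n := by
    rintro y (rfl | ⟨h1, _, _⟩)
    · rfl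
    · exact absurd rfl h1
  have hC : ∀ y, C n y → y = n := singleton_sup hA hdB
  have hC' : ∀ x, C x n → x = n := fun x h => hC x (C.symm h)
  -- the main induction
  have key : ∀ x y, (A ⊔ B) x y →
      (C x y ∨ (x = n ∧ ∃ w, w ≠ n ∧ B n w ∧ C w y)
             ∨ (y = n ∧ ∃ w, w ≠ n ∧ B n w ∧ C w x)) := by
    intro x y h
    rw [Setoid.sup_eq_eqvGen] at h
    have h' : EqvGen (fun x y => A x y ∨ B x y) x y := h
    clear h
    induction h' with
    | rel a b hab =>
        rcases hab with hab | hab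
        · exact Or.inl (supl hab)
        · by_cases han : a = n
          · by_cases hbn : b = n
            · exact Or.inl (show C a b by rw [han, hbn])
            · exact Or.inr (Or.inl ⟨han, b, hbn, han ▸ hab, C.refl' _⟩)
          · by_cases hbn : b = n
            · exact Or.inr (Or.inr ⟨hbn, a, han, hbn ▸ (B.symm hab), C.refl' _⟩)
            · exact Or.inl (supr (Or.inr ⟨han, hbn, hab⟩))
    | refl a => exact Or.inl (C.refl' _)
    | symm a b _ ih =>
        rcases ih with h1 | ⟨ha, w, hw, hBw, hCw⟩ | ⟨hb, w, hw, hBw, hCw⟩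
        · exact Or.inl (C.symm h1)
        · exact Or.inr (Or.inr ⟨ha, w, hw, hBw, hCw⟩)
        · exact Or.inr (Or.inl ⟨hb, w, hw, hBw, hCw⟩)
    | trans a b c _ _ ih1 ih2 =>
        rcases ih1 with h1 | ⟨ha, w, hw, hBw, hCw⟩ | ⟨hb, w, hw, hBw, hCw⟩
        · rcases ih2 with h2 | ⟨hb, w, hw, hBw, hCw⟩ | ⟨hc, w, hw, hBw, hCw⟩
          · exact Or.inl (C.trans h1 h2)
          · exact Or.inr (Or.inl ⟨hC' a (hb ▸ h1), w, hw, hBw, hCw⟩)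
          · exact Or.inr (Or.inr ⟨hc, w, hw, hBw, C.trans hCw (C.symm h1)⟩)
        · rcases ih2 with h2 | ⟨hb, w', hw', hBw', hCw'⟩ | ⟨hc, w', hw', hBw', hCw'⟩
          · by_cases hcn : c = n
            · have hbn : b = n := hC' b (hcn ▸ h2)
              exact absurd (hC' w (hbn ▸ hCw)) hw
            · exact Or.inr (Or.inl ⟨ha, w, hw, hBw, C.trans hCw h2⟩)
          · exact absurd (hC' w (hb ▸ hCw)) hw
          · exact Or.inl (show C a c by rw [ha, hc])
        · rcases ih2 with h2 | ⟨hb', w', hw', hBw', hCw'⟩ | ⟨hc, w', hw', hBw', hCw'⟩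
          · exact Or.inr (Or.inr ⟨hC c (hb ▸ h2), w, hw, hBw, hCw⟩)
          · -- key step: a ~ w ~ w' ~ c  through B-transitivity at n
            refine Or.inl (C.trans (C.symm hCw) (C.trans ?_ hCw'))
            exact supr (Or.inr ⟨hw, hw', B.trans (B.symm hBw) hBw'⟩)
          · exact absurd (hC' w' (hb ▸ hCw')) hw'
  apply Setoid.ext
  intro x y
  constructor
  · rintro (rfl | ⟨hx, hy, h⟩)
    · exact C.refl' _
    · rcases key x y h with h1 | ⟨ha, _⟩ | ⟨hb, _⟩
      · exact h1
      · exact absurd ha hx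
      · exact absurd hb hy
  · intro h
    have hle : C ≤ delS (A ⊔ B) n := by
      apply sup_le
      · intro u v huv
        by_cases heq : u = v
        · exact Or.inl heq
        · refine Or.inr ⟨?_, ?_, supl huv⟩
          · rintro rfl; exact heq (hA v huv).symm
          · rintro rfl; exact heq (hA u (A.symm huv))
      · rintro u v (rfl | ⟨hu, hv, huv⟩)
        · exact Or.inl rfl
        · exact Or.inr ⟨hu, hv, supr huv⟩
    exact Setoid.le_def.mp hle h


lemma sigmaJK_base (n k : ℕ) : sigmaJK n k k = 1 := by
  simp [sigmaJK]

lemma sigmaJK_succ (n j k : ℕ) (h : k ≤ j) :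
    sigmaJK n (j + 1) k = sPerm n j * sigmaJK n j k := by
  unfold sigmaJK
  have h1 : j + 1 - k = (j - k) + 1 := by omega
  rw [h1, List.range_succ_eq_map, List.map_cons, List.prod_cons, List.map_map]
  refine congrArg _ (congrArg _ (List.map_congr_left fun a _ => ?_))
  simp only [Function.comp_apply]
  congr 1
  omega

lemma sigmaJK_apply (n j k : ℕ) (hk : 1 ≤ k) (hkj : k ≤ j) (hjn : j ≤ n)
    (x : Fin (n + 1)) :
    ((sigmaJK n j k) x : ℕ) =
      if (x : ℕ) = k then j
      else if k < (x : ℕ) ∧ (x : ℕ) ≤ j then (x : ℕ) - 1 else (x : ℕ) := by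
  induction j, hkj using Nat.le_induction with
  | base =>
      rw [sigmaJK_base]
      simp only [Equiv.Perm.one_apply]
      split_ifs <;> omega
  | succ j hkj ih =>
      have hy := ih (by omega)
      have hs : sPerm n j = Equiv.swap (⟨j, by omega⟩ : Fin (n + 1)) ⟨j + 1, by omega⟩ := by
        unfold sPerm
        rw [dif_pos ⟨by omega, by omega⟩]
      rw [sigmaJK_succ n j k hkj, Equiv.Perm.mul_apply, hs, Equiv.swap_apply_def]
      simp only [Fin.ext_iff, apply_ite (Fin.val)]
      split_ifs at hy ⊢ <;> omega


end Bt

open Bt in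
/-- Let `1 ≤ k < n`, let `J` be a set partition of
`{0, 1, …, n-1}` (regarded as a partition of `{0, …, n}` with `n` a singleton
block) and let `I` be a set partition of `{0, 1, …, n}`.  With
`σ_{j,k} = s_{j-1} ⋯ s_k ∈ S_n` acting on partitions fixing `0`, one has
`((σ_{n,k}⁻¹(J) * I) * {n, k}) ∖ {n} = σ_{n-1,k}⁻¹(J) * ((I * {n, k}) ∖ {n})`
(deleted elements being kept as singleton blocks, and `I * J` denoting the join
of partitions). -/
theorem partition_sigma_identity (n : ℕ) (k : ℕ) (hk1 : 1 ≤ k) (hk2 : k < n)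
    (J I : Setoid (Fin (n + 1)))
    (hJ : ∀ y, J (Fin.last n) y → y = Fin.last n) :
    delS ((actInv (sigmaJK n n k) J ⊔ I) ⊔ pairS (Fin.last n) ⟨k, by omega⟩)
        (Fin.last n) =
      actInv (sigmaJK n (n - 1) k) J ⊔
        delS (I ⊔ pairS (Fin.last n) ⟨k, by omega⟩) (Fin.last n) := by

  set t : Equiv.Perm (Fin (n + 1)) :=
    Equiv.swap (Fin.last n) (⟨k, by omega⟩ : Fin (n + 1)) with htdef
  set A : Setoid (Fin (n + 1)) := actInv (sigmaJK n (n - 1) k) J with hAdef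
  set P : Setoid (Fin (n + 1)) := pairS (Fin.last n) (⟨k, by omega⟩ : Fin (n + 1)) with hPdef
  -- σ' fixes `n`
  have hlast : sigmaJK n (n - 1) k (Fin.last n) = Fin.last n := by
    have h1 := sigmaJK_apply n (n - 1) k hk1 (by omega) (by omega) (Fin.last n)
    simp only [Fin.val_last] at h1
    apply Fin.ext
    rw [h1, Fin.val_last]
    split_ifs <;> omega
  -- `n` is a singleton in A
  have hA : ∀ y, A (Fin.last n) y → y = Fin.last n := by
    intro y h
    have h' : J (sigmaJK n (n - 1) k (Fin.last n)) (sigmaJK n (n - 1) k y) := h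
    rw [hlast] at h'
    have := hJ _ h'
    exact (sigmaJK n (n - 1) k).injective (this.trans hlast.symm)
  -- value of the swap
  have htx : ∀ x : Fin (n + 1),
      ((t x : Fin (n + 1)) : ℕ) =
        if (x : ℕ) = n then k else if (x : ℕ) = k then n else (x : ℕ) := by
    intro x
    rw [htdef, Equiv.swap_apply_def]
    simp only [Fin.ext_iff, Fin.val_last, apply_ite (Fin.val)]
  -- σ = σ' ∘ t
  have hfact : ∀ x : Fin (n + 1), sigmaJK n n k x = sigmaJK n (n - 1) k (t x) := by
    intro x
    apply Fin.ext
    have hx := x.isLt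
    have hσ := sigmaJK_apply n n k hk1 (by omega) le_rfl x
    have hσ' := sigmaJK_apply n (n - 1) k hk1 (by omega) (by omega) (t x)
    rw [htx x] at hσ'
    rw [hσ, hσ']
    split_ifs <;> omega
  have hcomap : ∀ x y, actInv (sigmaJK n n k) J x y ↔ A (t x) (t y) := by
    intro x y
    show J (sigmaJK n n k x) (sigmaJK n n k y) ↔
      J (sigmaJK n (n - 1) k (t x)) (sigmaJK n (n - 1) k (t y))
    rw [hfact x, hfact y]
  -- P relates x and t x
  have hPnk : P (Fin.last n) (⟨k, by omega⟩ : Fin (n + 1)) :=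
    Relation.EqvGen.rel _ _ ⟨rfl, rfl⟩
  have hP : ∀ x : Fin (n + 1), P x (t x) := by
    intro x
    by_cases hxn : x = Fin.last n
    · rw [hxn, htdef, Equiv.swap_apply_left]; exact hPnk
    · by_cases hxk : x = (⟨k, by omega⟩ : Fin (n + 1))
      · rw [hxk, htdef, Equiv.swap_apply_right]; exact P.symm hPnk
      · rw [htdef, Equiv.swap_apply_of_ne_of_ne hxn hxk]
  -- joining with P kills the swap
  have step1 : actInv (sigmaJK n n k) J ⊔ P = A ⊔ P := by
    apply le_antisymm
    · apply sup_le _ le_sup_right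
      refine Setoid.le_def.mpr fun {x y} h => ?_
      have h' : A (t x) (t y) := (hcomap x y).mp h
      exact (A ⊔ P).trans (supr (hP x))
        ((A ⊔ P).trans (supl h') ((A ⊔ P).symm (supr (hP y))))
    · apply sup_le _ le_sup_right
      refine Setoid.le_def.mpr fun {x y} h => ?_
      have h' : actInv (sigmaJK n n k) J (t x) (t y) := by
        refine (hcomap (t x) (t y)).mpr ?_
        rw [htdef, Equiv.swap_apply_self, Equiv.swap_apply_self]
        exact h
      exact (actInv (sigmaJK n n k) J ⊔ P).trans (supr (hP x))
        ((actInv (sigmaJK n n k) J ⊔ P).trans (supl h')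
          ((actInv (sigmaJK n n k) J ⊔ P).symm (supr (hP y))))
  have hre : (actInv (sigmaJK n n k) J ⊔ I) ⊔ P = A ⊔ (I ⊔ P) := by
    rw [sup_right_comm, step1, sup_assoc, sup_comm P I]
  rw [hre, delS_sup_of_singleton _ _ _ hA]
end
end
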